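/- arXiv:2311.13889 — 6 statements merged into one kernel-verified Lean document; each statement's English description precedes it below -/
import Mathlib

section
/- Let n ≥ 1, let W ∈ ℝ^{2n×2n}, V ∈ ℝ^{n×n}, let 0 < γ ≤ 1 and ε > 0, and set S := WᵀW + ε·I_{2n}. Then the matrix T := (1/2)·(S₁₁/γ² + S₂₂) + V − Vᵀ is invertible, and the matrix A := S₁₂ · T⁻¹ ∈ ℝ^{n×n} satisfies |λ| < γ for every complex eigenvalue λ of A; in particular A is Schur. -/
open Matrix Polynomial

/-- A real square matrix is Schur if every complex root of its characteristic
polynomial has modulus strictly less than one. -/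
def IsSchur {n : ℕ} (A : Matrix (Fin n) (Fin n) ℝ) : Prop :=
  ∀ μ : ℂ, ((A.charpoly).map (algebraMap ℝ ℂ)).IsRoot μ → ‖μ‖ < 1

private lemma exists_eigenvec {m : Type*} [Fintype m] [DecidableEq m]
    (B : Matrix m m ℂ) (μ : ℂ) (h : B.charpoly.IsRoot μ) :
    ∃ v : m → ℂ, v ≠ 0 ∧ B.mulVec v = μ • v := by
  have hdet : (μ • (1 : Matrix m m ℂ) - B).det = 0 := by
    rw [Polynomial.IsRoot, Matrix.charpoly, _root_.eval_det, Matrix.matPolyEquiv_charmatrix,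
      Polynomial.eval_sub, Polynomial.eval_X, Polynomial.eval_C] at h
    convert h using 3
    ext i j
    by_cases hij : i = j <;>
      simp [Matrix.scalar_apply, Matrix.smul_apply, Matrix.one_apply, Matrix.diagonal_apply, hij]
  obtain ⟨v, hv, hmul⟩ := (Matrix.exists_mulVec_eq_zero_iff).mpr hdet
  refine ⟨v, hv, ?_⟩
  rw [Matrix.sub_mulVec, Matrix.smul_mulVec, Matrix.one_mulVec, sub_eq_zero] at hmul
  exact hmul.symm

private lemma quad_mul {k m : Type*} [Fintype k] [Fintype m]
    (M N : Matrix m k ℂ) (y : k → ℂ) :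
    star y ⬝ᵥ (Mᴴ * N) *ᵥ y = star (M *ᵥ y) ⬝ᵥ (N *ᵥ y) := by
  rw [← Matrix.mulVec_mulVec, Matrix.dotProduct_mulVec, ← Matrix.star_mulVec]

private lemma star_quad {m : Type*} [Fintype m] (M : Matrix m m ℂ) (y : m → ℂ) :
    star (star y ⬝ᵥ M *ᵥ y) = star y ⬝ᵥ Mᴴ *ᵥ y := by
  rw [← Matrix.star_dotProduct_star, star_star, Matrix.star_mulVec, ← Matrix.dotProduct_mulVec]

private lemma dot_star_self {m : Type*} [Fintype m] (u : m → ℂ) :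
    star u ⬝ᵥ u = ((‖(WithLp.equiv 2 (m → ℂ)).symm u‖ : ℝ) : ℂ) ^ 2 := by
  have h : star u ⬝ᵥ u = inner ℂ ((WithLp.equiv 2 (m → ℂ)).symm u) ((WithLp.equiv 2 (m → ℂ)).symm u) := by
    rw [dotProduct_comm]; rfl
  rw [h, inner_self_eq_norm_sq_to_K]
  rfl

private lemma abs_dot_le {m : Type*} [Fintype m] (u v : m → ℂ) :
    ‖star u ⬝ᵥ v‖ ≤
      ‖(WithLp.equiv 2 (m → ℂ)).symm u‖ * ‖(WithLp.equiv 2 (m → ℂ)).symm v‖ := by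
  have h : star u ⬝ᵥ v = inner ℂ ((WithLp.equiv 2 (m → ℂ)).symm u) ((WithLp.equiv 2 (m → ℂ)).symm v) := by
    rw [dotProduct_comm]; rfl
  rw [h]
  exact norm_inner_le_norm _ _

private lemma real_quad_mul {k m : Type*} [Fintype k] [Fintype m]
    (M : Matrix m k ℝ) (x : k → ℝ) :
    x ⬝ᵥ (Mᵀ * M) *ᵥ x = (M *ᵥ x) ⬝ᵥ (M *ᵥ x) := by
  rw [← Matrix.mulVec_mulVec, Matrix.dotProduct_mulVec, Matrix.vecMul_transpose]

private lemma real_dot_self_nonneg {m : Type*} [Fintype m] (u : m → ℝ) :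
    0 ≤ u ⬝ᵥ u :=
  Finset.sum_nonneg fun i _ => mul_self_nonneg (u i)

set_option maxHeartbeats 2000000 in
theorem stmt_0 {n : ℕ} (hn : 1 ≤ n)
    (W : Matrix (Fin n ⊕ Fin n) (Fin n ⊕ Fin n) ℝ)
    (V : Matrix (Fin n) (Fin n) ℝ) (γ ε : ℝ)
    (hγ0 : 0 < γ) (hγ1 : γ ≤ 1) (hε : 0 < ε) :
    let S := Wᵀ * W + ε • (1 : Matrix (Fin n ⊕ Fin n) (Fin n ⊕ Fin n) ℝ)
    let T := (1 / 2 : ℝ) • ((γ ^ 2)⁻¹ • S.toBlocks₁₁ + S.toBlocks₂₂) + V - Vᵀ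
    let A := S.toBlocks₁₂ * T⁻¹
    IsUnit T ∧
      (∀ μ : ℂ, ((A.charpoly).map (algebraMap ℝ ℂ)).IsRoot μ → ‖μ‖ < γ) ∧
      IsSchur A := by
  intro S T A
  have hS : S = Wᵀ * W + ε • (1 : Matrix (Fin n ⊕ Fin n) (Fin n ⊕ Fin n) ℝ) := rfl
  have hT : T = (1 / 2 : ℝ) • ((γ ^ 2)⁻¹ • S.toBlocks₁₁ + S.toBlocks₂₂) + V - Vᵀ := rfl
  have hA : A = S.toBlocks₁₂ * T⁻¹ := rfl
  set U₁ : Matrix (Fin n ⊕ Fin n) (Fin n) ℝ := W.submatrix id Sum.inl with hU₁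
  set U₂ : Matrix (Fin n ⊕ Fin n) (Fin n) ℝ := W.submatrix id Sum.inr with hU₂
  have hS11 : S.toBlocks₁₁ = U₁ᵀ * U₁ + ε • 1 := by
    ext i j
    by_cases hij : i = j <;>
      simp [hS, Matrix.toBlocks₁₁, Matrix.mul_apply, Matrix.one_apply, hij, hU₁,
        Matrix.add_apply, Matrix.smul_apply, Matrix.transpose_apply, Matrix.submatrix_apply]
  have hS22 : S.toBlocks₂₂ = U₂ᵀ * U₂ + ε • 1 := by
    ext i j
    by_cases hij : i = j <;>
      simp [hS, Matrix.toBlocks₂₂, Matrix.mul_apply, Matrix.one_apply, hij, hU₂,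
        Matrix.add_apply, Matrix.smul_apply, Matrix.transpose_apply, Matrix.submatrix_apply]
  have hS12 : S.toBlocks₁₂ = U₁ᵀ * U₂ := by
    ext i j
    simp [hS, Matrix.toBlocks₁₂, Matrix.mul_apply, Matrix.one_apply, hU₁, hU₂,
      Matrix.add_apply, Matrix.smul_apply, Matrix.transpose_apply, Matrix.submatrix_apply]
  have hγ2 : (0:ℝ) < (γ ^ 2)⁻¹ := by positivity
  -- positivity of the real quadratic form of T
  have hpos : ∀ x : Fin n → ℝ, x ≠ 0 → 0 < x ⬝ᵥ T *ᵥ x := by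
    intro x hx
    have hVsym : x ⬝ᵥ Vᵀ *ᵥ x = x ⬝ᵥ V *ᵥ x := by
      rw [Matrix.dotProduct_mulVec, Matrix.vecMul_transpose, dotProduct_comm]
    have hq1 : 0 ≤ (U₁ *ᵥ x) ⬝ᵥ (U₁ *ᵥ x) := real_dot_self_nonneg _
    have hq2 : 0 ≤ (U₂ *ᵥ x) ⬝ᵥ (U₂ *ᵥ x) := real_dot_self_nonneg _
    have hxx : 0 < x ⬝ᵥ x :=
      lt_of_le_of_ne (real_dot_self_nonneg x)
        (fun h => hx (dotProduct_self_eq_zero.mp h.symm))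
    rw [hT, Matrix.sub_mulVec, Matrix.add_mulVec, Matrix.smul_mulVec,
      Matrix.add_mulVec, Matrix.smul_mulVec, dotProduct_sub, dotProduct_add,
      dotProduct_smul, dotProduct_add, dotProduct_smul, hVsym, hS11, hS22,
      Matrix.add_mulVec, Matrix.add_mulVec, dotProduct_add, dotProduct_add,
      real_quad_mul, real_quad_mul, Matrix.smul_mulVec, Matrix.one_mulVec,
      dotProduct_smul]
    simp only [smul_eq_mul]
    nlinarith [mul_pos hε hxx, mul_pos hγ2 (mul_pos hε hxx)]
  have hTunit : IsUnit T := by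
    rw [Matrix.isUnit_iff_isUnit_det, isUnit_iff_ne_zero]
    intro h0
    obtain ⟨x, hx, hmul⟩ := Matrix.exists_mulVec_eq_zero_iff.mpr h0
    have h1 := hpos x hx
    rw [hmul, dotProduct_zero] at h1
    exact lt_irrefl 0 h1
  have hTdet : IsUnit T.det := (Matrix.isUnit_iff_isUnit_det T).mp hTunit
  -- the main spectral bound
  have main : ∀ μ : ℂ, ((A.charpoly).map (algebraMap ℝ ℂ)).IsRoot μ → ‖μ‖ < γ := by
    intro μ hμ
    rw [← Matrix.charpoly_map] at hμ
    obtain ⟨v, hv, hAv⟩ := exists_eigenvec _ _ hμ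
    set RC := algebraMap ℝ ℂ with hRC
    set Tc := T.map RC with hTcdef
    have hTcdet : IsUnit Tc.det := by
      rw [hTcdef, ← RingHom.mapMatrix_apply, ← RingHom.map_det]
      exact hTdet.map RC
    set y := Tc⁻¹ *ᵥ v with hydef
    have hTy : Tc *ᵥ y = v := by
      rw [hydef, Matrix.mulVec_mulVec, Matrix.mul_nonsing_inv _ hTcdet, Matrix.one_mulVec]
    have hy0 : y ≠ 0 := fun h => hv (by rw [← hTy, h, Matrix.mulVec_zero])
    have hATc : (A.map RC) * Tc = S.toBlocks₁₂.map RC := by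
      rw [hTcdef, ← Matrix.map_mul]
      congr 1
      rw [hA, Matrix.mul_assoc, Matrix.nonsing_inv_mul _ hTdet, Matrix.mul_one]
    have heig : (S.toBlocks₁₂.map RC) *ᵥ y = μ • (Tc *ᵥ y) := by
      rw [← hATc, ← Matrix.mulVec_mulVec, hTy, hAv]
    set U₁c := U₁.map RC with hU₁c
    set U₂c := U₂.map RC with hU₂c
    set Vc := V.map RC with hVc
    set u₁ := U₁c *ᵥ y with hu₁
    set u₂ := U₂c *ᵥ y with hu₂
    set p := ‖(WithLp.equiv 2 (Fin n ⊕ Fin n → ℂ)).symm u₁‖ with hp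
    set q := ‖(WithLp.equiv 2 (Fin n ⊕ Fin n → ℂ)).symm u₂‖ with hq
    set r := ‖(WithLp.equiv 2 (Fin n → ℂ)).symm y‖ with hrdef
    have hS12c : S.toBlocks₁₂.map RC = U₁cᴴ * U₂c := by
      rw [hS12, Matrix.map_mul]
      congr 1
      ext i j
      simp [Matrix.conjTranspose_apply, Matrix.map_apply, Matrix.transpose_apply,
        Complex.conj_ofReal, hU₁c, hRC]
    have hS11c : S.toBlocks₁₁.map RC = U₁cᴴ * U₁c + (ε : ℂ) • 1 := by
      ext i j
      by_cases hij : i = j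
      all_goals simp [hS11, Matrix.map_apply, Matrix.add_apply, Matrix.mul_apply,
        Matrix.smul_apply, Matrix.one_apply, Matrix.conjTranspose_apply,
        Matrix.transpose_apply, Complex.conj_ofReal, hU₁c, hRC, hij]
      all_goals (push_cast; ring)
    have hS22c : S.toBlocks₂₂.map RC = U₂cᴴ * U₂c + (ε : ℂ) • 1 := by
      ext i j
      by_cases hij : i = j
      all_goals simp [hS22, Matrix.map_apply, Matrix.add_apply, Matrix.mul_apply,
        Matrix.smul_apply, Matrix.one_apply, Matrix.conjTranspose_apply,
        Matrix.transpose_apply, Complex.conj_ofReal, hU₂c, hRC, hij]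
      all_goals (push_cast; ring)
    have ha : star y ⬝ᵥ (S.toBlocks₁₁.map RC) *ᵥ y = ((p ^ 2 + ε * r ^ 2 : ℝ) : ℂ) := by
      rw [hS11c, Matrix.add_mulVec, dotProduct_add, quad_mul, Matrix.smul_mulVec,
        Matrix.one_mulVec, dotProduct_smul, smul_eq_mul, dot_star_self, dot_star_self]
      push_cast
      ring
    have hb : star y ⬝ᵥ (S.toBlocks₂₂.map RC) *ᵥ y = ((q ^ 2 + ε * r ^ 2 : ℝ) : ℂ) := by
      rw [hS22c, Matrix.add_mulVec, dotProduct_add, quad_mul, Matrix.smul_mulVec,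
        Matrix.one_mulVec, dotProduct_smul, smul_eq_mul, dot_star_self, dot_star_self]
      push_cast
      ring
    have h12 : star y ⬝ᵥ (S.toBlocks₁₂.map RC) *ᵥ y = star u₁ ⬝ᵥ u₂ := by
      rw [hS12c, quad_mul]
    have hTc2 : Tc = ((1 / 2 : ℝ) : ℂ) • ((((γ ^ 2)⁻¹ : ℝ) : ℂ) • (S.toBlocks₁₁.map RC)
        + S.toBlocks₂₂.map RC) + Vc - Vcᴴ := by
      ext i j
      simp [hTcdef, hT, Matrix.map_apply, Matrix.add_apply, Matrix.sub_apply,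
        Matrix.smul_apply, Matrix.conjTranspose_apply, Matrix.transpose_apply,
        smul_eq_mul, Complex.conj_ofReal, hVc, hRC]
      all_goals (push_cast; ring)
    set c := star y ⬝ᵥ Tc *ᵥ y with hcdef
    have hd : (star y ⬝ᵥ Vc *ᵥ y - star y ⬝ᵥ Vcᴴ *ᵥ y).re = 0 := by
      rw [← star_quad]
      simp [Complex.sub_re, Complex.conj_re]
    have hcval : c = (((1 / 2) * ((γ ^ 2)⁻¹ * (p ^ 2 + ε * r ^ 2) + (q ^ 2 + ε * r ^ 2)) : ℝ) : ℂ)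
        + (star y ⬝ᵥ Vc *ᵥ y - star y ⬝ᵥ Vcᴴ *ᵥ y) := by
      rw [hcdef, hTc2, Matrix.sub_mulVec, Matrix.add_mulVec, Matrix.smul_mulVec,
        Matrix.add_mulVec, Matrix.smul_mulVec, dotProduct_sub, dotProduct_add,
        dotProduct_smul, dotProduct_add, dotProduct_smul, ha, hb, smul_eq_mul, smul_eq_mul]
      push_cast
      ring
    have hcre : c.re = (1 / 2) * ((γ ^ 2)⁻¹ * (p ^ 2 + ε * r ^ 2) + (q ^ 2 + ε * r ^ 2)) := by
      rw [hcval, Complex.add_re, Complex.ofReal_re, hd, add_zero]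
    have hprod : μ * c = star u₁ ⬝ᵥ u₂ := by
      rw [← h12, hcdef, heig, dotProduct_smul, smul_eq_mul]
    have habs : ‖μ‖ * ‖c‖ ≤ p * q := by
      rw [← norm_mul, hprod]
      exact abs_dot_le u₁ u₂
    clear_value p q r
    -- the final real arithmetic
    have hrpos : 0 < r := by
      rw [hrdef, norm_pos_iff]
      simpa using hy0
    have hp0 : 0 ≤ p := by rw [hp]; exact norm_nonneg _
    have hq0 : 0 ≤ q := by rw [hq]; exact norm_nonneg _
    have hrele : c.re ≤ ‖c‖ := Complex.re_le_norm c
    have hγinv : (0:ℝ) < γ⁻¹ := inv_pos.mpr hγ0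
    have step1 : (γ ^ 2)⁻¹ * p ^ 2 + q ^ 2 ≥ 2 * γ⁻¹ * (p * q) := by
      have h := sq_nonneg (γ⁻¹ * p - q)
      have h2 : (γ⁻¹) ^ 2 = (γ ^ 2)⁻¹ := by rw [← inv_pow]
      nlinarith [h]
    have hεr : 0 < ε * r ^ 2 := by positivity
    have step2 : γ⁻¹ * (p * q) < c.re := by
      rw [hcre]
      nlinarith [mul_pos hγ2 hεr]
    have hκpos : 0 < ‖c‖ := by
      have h0 : (0:ℝ) ≤ γ⁻¹ * (p * q) := by positivity
      exact lt_of_lt_of_le (lt_of_le_of_lt h0 step2) hrele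
    have step3 : γ⁻¹ * (‖μ‖ * ‖c‖) ≤ γ⁻¹ * (p * q) :=
      mul_le_mul_of_nonneg_left habs hγinv.le
    have step4 : γ⁻¹ * (‖μ‖ * ‖c‖) < ‖c‖ :=
      lt_of_le_of_lt step3 (lt_of_lt_of_le step2 hrele)
    have step5 : ‖μ‖ * ‖c‖ < γ * ‖c‖ := by
      have h5 := mul_lt_mul_of_pos_left step4 hγ0
      rwa [← mul_assoc, mul_inv_cancel₀ hγ0.ne', one_mul] at h5
    exact lt_of_mul_lt_mul_right step5 hκpos.le
  refine ⟨hTunit, main, fun μ hμ => lt_of_lt_of_le (main μ hμ) hγ1⟩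
end

section
/- Let A ∈ ℝ^{n×n} be a Schur matrix and let ε > 0. Then there exist matrices W ∈ ℝ^{2n×2n} and V ∈ ℝ^{n×n} such that, setting S := WᵀW + ε·I_{2n}, the matrix S₁₁ + V − Vᵀ is invertible, S₂₂ is invertible, and A = I_n − 2·(S₁₁ + V − Vᵀ)⁻¹ · S₁₂ · S₂₂⁻¹ · S₂₁. -/
open Matrix Polynomial

section decay

attribute [local instance] Matrix.linftyOpNormedAddCommGroup Matrix.linftyOpNormedRing
  Matrix.linftyOpNormedAlgebra

variable {n : ℕ}

private lemma entry_le_norm (M : Matrix (Fin n) (Fin n) ℂ) (i j : Fin n) :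
    ‖M i j‖₊ ≤ ‖M‖₊ := by
  rw [Matrix.linfty_opNNNorm_def]
  refine le_trans
    (Finset.single_le_sum (f := fun j => ‖M i j‖₊) (fun _ _ => zero_le) (Finset.mem_univ j))
    (Finset.le_sup (f := fun i => ∑ j, ‖M i j‖₊) (Finset.mem_univ i))

private lemma schur_decay {A : Matrix (Fin n) (Fin n) ℝ} (hA : IsSchur A) :
    ∃ (N : ℕ) (r : ℝ), 0 < r ∧ r < 1 ∧ ∀ k, N ≤ k → ∀ i j, |(A ^ k) i j| ≤ r ^ k := by
  rcases Nat.eq_zero_or_pos n with hn | hn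
  · exact ⟨0, 1/2, by norm_num, by norm_num, fun k _ i => by subst hn; exact i.elim0⟩
  haveI : CompleteSpace (Matrix (Fin n) (Fin n) ℂ) :=
    FiniteDimensional.complete ℂ (Matrix (Fin n) (Fin n) ℂ)
  haveI : Nontrivial (Matrix (Fin n) (Fin n) ℂ) := by
    refine ⟨0, 1, fun h => ?_⟩
    have i : Fin n := ⟨0, hn⟩
    have := congrFun (congrFun h i) i
    simp at this
  set Ac : Matrix (Fin n) (Fin n) ℂ := (algebraMap ℝ ℂ).mapMatrix A with hAc
  -- spectrum is contained in unit ball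
  have hspec : ∀ z ∈ spectrum ℂ Ac, ‖z‖₊ < 1 := by
    intro z hz
    rw [spectrum.mem_iff] at hz
    have hdet : ((z • (1 : Matrix (Fin n) (Fin n) ℂ)) - Ac).det = 0 := by
      by_contra hd
      exact hz (by
        rw [Algebra.algebraMap_eq_smul_one]
        exact (Matrix.isUnit_iff_isUnit_det _).mpr (isUnit_iff_ne_zero.mpr hd))
    have hroot : (Ac.charpoly).IsRoot z := by
      have : (Ac.charpoly).eval z = ((z • (1 : Matrix (Fin n) (Fin n) ℂ)) - Ac).det := by
        rw [Matrix.charpoly, ← Polynomial.coe_evalRingHom, RingHom.map_det]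
        congr 1
        ext i j
        by_cases hij : i = j <;>
          simp [hij, Matrix.charmatrix_apply_eq, Matrix.charmatrix_apply_ne, Matrix.one_apply,
            Matrix.smul_apply, Matrix.sub_apply, hij]
      exact this.trans hdet
    have : ‖z‖ < 1 := by
      apply hA
      rwa [hAc, RingHom.mapMatrix_apply, Matrix.charpoly_map] at hroot
      
    rw [← NNReal.coe_lt_coe]
    simpa using this
  have hrad : spectralRadius ℂ Ac < 1 :=
    spectrum.spectralRadius_lt_of_forall_lt Ac hspec
  obtain ⟨ρ, hρ1, hρ2⟩ := exists_between hrad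
  have hlimsup := spectrum.limsup_pow_nnnorm_pow_one_div_le_spectralRadius Ac
  have hev : ∀ᶠ k : ℕ in Filter.atTop,
      (‖Ac ^ k‖₊ : ENNReal) ^ (1 / (k : ℝ)) < ρ :=
    Filter.eventually_lt_of_limsup_lt (lt_of_le_of_lt hlimsup hρ1)
  obtain ⟨N, hN⟩ := hev.exists_forall_of_atTop
  have hρtop : ρ ≠ ⊤ := ne_top_of_lt hρ2
  set r : ℝ := ρ.toReal with hr
  have hr1 : r < 1 := by
    rw [hr]
    exact ENNReal.toReal_lt_of_lt_ofReal (by simpa [ENNReal.ofReal_one] using hρ2)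
  have hr0 : 0 < r := by
    rw [hr]
    exact ENNReal.toReal_pos (by
      intro h
      simp [h] at hρ1) hρtop
  refine ⟨N + 1, r, hr0, hr1, fun k hk i j => ?_⟩
  have hk0 : k ≠ 0 := by omega
  have h1 : (‖Ac ^ k‖₊ : ENNReal) ≤ ρ ^ k := by
    have h2 := (hN k (by omega)).le
    calc (‖Ac ^ k‖₊ : ENNReal)
        = ((‖Ac ^ k‖₊ : ENNReal) ^ (1 / (k : ℝ))) ^ (k : ℕ) := by
          rw [← ENNReal.rpow_natCast _ k, ← ENNReal.rpow_mul, one_div,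
            inv_mul_cancel₀ (by exact_mod_cast hk0), ENNReal.rpow_one]
      _ ≤ ρ ^ (k : ℕ) := pow_le_pow_left' h2 k
  have h3 : ‖Ac ^ k‖₊ ≤ ρ.toReal ^ k := by
    have := ENNReal.toReal_mono (by simp [hρtop, ENNReal.pow_ne_top]) h1
    simpa [ENNReal.toReal_pow] using this
  have hentry : ‖(Ac ^ k) i j‖ ≤ r ^ k := le_trans (entry_le_norm _ i j) h3
  have hmap : (Ac ^ k) i j = ((A ^ k) i j : ℂ) := by
    rw [hAc, ← map_pow, RingHom.mapMatrix_apply]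
    rfl
  rw [hmap] at hentry
  simpa [Complex.norm_real, Real.norm_eq_abs] using hentry

end decay

section lyap

variable {n : ℕ}

private lemma dpnn (v : Fin n → ℝ) : 0 ≤ v ⬝ᵥ v :=
  Finset.sum_nonneg fun i _ => mul_self_nonneg _

private lemma dp_pos {v : Fin n → ℝ} (hv : v ≠ 0) : 0 < v ⬝ᵥ v := by
  rcases (dpnn v).lt_or_eq with h | h
  · exact h
  exfalso
  apply hv
  funext i
  have h1 : ∀ i ∈ Finset.univ, (0:ℝ) ≤ v i * v i := fun i _ => mul_self_nonneg _
  have := (Finset.sum_eq_zero_iff_of_nonneg h1).mp h.symm i (Finset.mem_univ i)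
  exact mul_self_eq_zero.mp this

private lemma hasSum_LMR {f : ℕ → Matrix (Fin n) (Fin n) ℝ} {S : Matrix (Fin n) (Fin n) ℝ}
    (h : ∀ i j, HasSum (fun k => f k i j) (S i j)) (L R : Matrix (Fin n) (Fin n) ℝ)
    (i j : Fin n) : HasSum (fun k => (L * f k * R) i j) ((L * S * R) i j) := by
  simp only [Matrix.mul_apply, Finset.sum_mul]
  apply hasSum_sum
  intro b _
  apply hasSum_sum
  intro a _
  exact ((h a b).mul_left (L i a)).mul_right (R b j)

private lemma hasSum_quad {f : ℕ → Matrix (Fin n) (Fin n) ℝ} {S : Matrix (Fin n) (Fin n) ℝ}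
    (h : ∀ i j, HasSum (fun k => f k i j) (S i j)) (x : Fin n → ℝ) :
    HasSum (fun k => x ⬝ᵥ (f k *ᵥ x)) (x ⬝ᵥ (S *ᵥ x)) := by
  simp only [dotProduct, Matrix.mulVec, Finset.mul_sum]
  apply hasSum_sum
  intro i _
  apply hasSum_sum
  intro j _
  exact ((h i j).mul_right (x j)).mul_left (x i)

private lemma exists_lyapunov {A : Matrix (Fin n) (Fin n) ℝ} (hA : IsSchur A) :
    ∃ P : Matrix (Fin n) (Fin n) ℝ, Pᵀ = P ∧ (∀ x, x ⬝ᵥ x ≤ x ⬝ᵥ (P *ᵥ x)) ∧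
      (∀ x, 0 ≤ x ⬝ᵥ (P *ᵥ x)) ∧ Aᵀ * P * A = P - 1 := by
  obtain ⟨N, r, hr0, hr1, hd⟩ := schur_decay hA
  have hsum : ∀ i j, Summable (fun k => ((Aᵀ ^ k) * (A ^ k)) i j) := by
    intro i j
    apply Summable.of_norm_bounded_eventually_nat (g := fun k => (n : ℝ) * (r ^ 2) ^ k)
    · exact (summable_geometric_of_lt_one (by positivity) (by nlinarith)).mul_left _
    · filter_upwards [Filter.eventually_ge_atTop N] with k hk
      rw [Real.norm_eq_abs, Matrix.mul_apply]
      calc |∑ l, (Aᵀ ^ k) i l * (A ^ k) l j|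
          ≤ ∑ l, |(Aᵀ ^ k) i l * (A ^ k) l j| := Finset.abs_sum_le_sum_abs _ _
        _ ≤ ∑ _l : Fin n, r ^ k * r ^ k := by
            apply Finset.sum_le_sum
            intro l _
            rw [abs_mul, ← Matrix.transpose_pow, Matrix.transpose_apply]
            exact mul_le_mul (hd k hk l i) (hd k hk l j) (abs_nonneg _)
              (le_trans (abs_nonneg _) (hd k hk l i))
        _ = (n : ℝ) * (r ^ 2) ^ k := by
            rw [Finset.sum_const, Finset.card_univ, Fintype.card_fin, nsmul_eq_mul]
            ring
  set P : Matrix (Fin n) (Fin n) ℝ :=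
    Matrix.of (fun i j => ∑' k, ((Aᵀ ^ k) * (A ^ k)) i j) with hPdef
  have hP : ∀ i j, HasSum (fun k => ((Aᵀ ^ k) * (A ^ k)) i j) (P i j) :=
    fun i j => (hsum i j).hasSum
  have hsymk : ∀ (k : ℕ) (i j : Fin n), ((Aᵀ ^ k) * (A ^ k)) j i = ((Aᵀ ^ k) * (A ^ k)) i j := by
    intro k i j
    simp only [Matrix.mul_apply, ← Matrix.transpose_pow, Matrix.transpose_apply]
    exact Finset.sum_congr rfl fun l _ => mul_comm _ _
  have hterm : ∀ (k : ℕ) (x : Fin n → ℝ),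
      x ⬝ᵥ (((Aᵀ ^ k) * (A ^ k)) *ᵥ x) = ((A ^ k) *ᵥ x) ⬝ᵥ ((A ^ k) *ᵥ x) := by
    intro k x
    rw [← Matrix.mulVec_mulVec, Matrix.dotProduct_mulVec, ← Matrix.transpose_pow,
      Matrix.vecMul_transpose]
  refine ⟨P, ?_, ?_, ?_, ?_⟩
  · ext i j
    rw [Matrix.transpose_apply]
    exact tsum_congr fun k => hsymk k i j
  · intro x
    have h0 := le_hasSum (hasSum_quad hP x) 0 (fun k _ => by
      rw [hterm]; exact dpnn _)
    simpa [hterm 0 x] using h0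
  · intro x
    refine le_trans (dpnn x) ?_
    have h0 := le_hasSum (hasSum_quad hP x) 0 (fun k _ => by
      rw [hterm]; exact dpnn _)
    simpa [hterm 0 x] using h0
  · ext i j
    have h1 := hasSum_LMR hP Aᵀ A i j
    have h2 : ∀ k : ℕ, Aᵀ * ((Aᵀ ^ k) * (A ^ k)) * A = (Aᵀ ^ (k + 1)) * (A ^ (k + 1)) := by
      intro k
      rw [pow_succ A, pow_succ' Aᵀ]
      simp [mul_assoc]
    simp only [h2] at h1
    have h3 : HasSum (fun k => ((Aᵀ ^ (k + 1)) * (A ^ (k + 1))) i j)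
        (P i j - ((Aᵀ ^ 0) * (A ^ 0)) i j) :=
      (hasSum_nat_add_iff (f := fun k => ((Aᵀ ^ k) * (A ^ k)) i j) 1).mpr
        (by simpa using hP i j)
    have h4 := h1.unique h3
    simpa using h4

end lyap

section quad

variable {n : ℕ}

private lemma mulVec_dp_le (Nm : Matrix (Fin n) (Fin n) ℝ) (x : Fin n → ℝ) :
    (Nm *ᵥ x) ⬝ᵥ (Nm *ᵥ x) ≤ (∑ i, ∑ j, (Nm i j) ^ 2) * (x ⬝ᵥ x) := by
  have hx : x ⬝ᵥ x = ∑ j, (x j) ^ 2 := Finset.sum_congr rfl fun j _ => (sq (x j)).symm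
  calc (Nm *ᵥ x) ⬝ᵥ (Nm *ᵥ x) = ∑ i, (∑ j, Nm i j * x j) ^ 2 := by
        refine Finset.sum_congr rfl fun i _ => ?_
        rw [Matrix.mulVec, dotProduct, sq]
    _ ≤ ∑ i, (∑ j, (Nm i j) ^ 2) * (∑ j, (x j) ^ 2) := by
        refine Finset.sum_le_sum fun i _ => ?_
        exact Finset.sum_mul_sq_le_sq_mul_sq _ _ _
    _ = (∑ i, ∑ j, (Nm i j) ^ 2) * (x ⬝ᵥ x) := by rw [hx, ← Finset.sum_mul]

private lemma quad_ub (P : Matrix (Fin n) (Fin n) ℝ) (x : Fin n → ℝ) :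
    x ⬝ᵥ (P *ᵥ x) ≤ (∑ i, ∑ j, |P i j|) * (x ⬝ᵥ x) := by
  have hsq : ∀ i, (x i) ^ 2 ≤ x ⬝ᵥ x := by
    intro i
    have : (x i) * (x i) ≤ ∑ j, x j * x j :=
      Finset.single_le_sum (f := fun j => x j * x j) (fun j _ => mul_self_nonneg _)
        (Finset.mem_univ i)
    rwa [← sq] at this
  have habs : ∀ i j, |x i * x j| ≤ x ⬝ᵥ x := by
    intro i j
    rw [abs_mul]
    nlinarith [hsq i, hsq j, abs_nonneg (x i), abs_nonneg (x j), sq_abs (x i), sq_abs (x j)]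
  calc x ⬝ᵥ (P *ᵥ x) = ∑ i, ∑ j, P i j * (x i * x j) := by
        refine Finset.sum_congr rfl fun i _ => ?_
        rw [Matrix.mulVec, dotProduct, Finset.mul_sum]
        exact Finset.sum_congr rfl fun j _ => by ring
    _ ≤ ∑ i, ∑ j, |P i j| * (x ⬝ᵥ x) := by
        refine Finset.sum_le_sum fun i _ => Finset.sum_le_sum fun j _ => ?_
        calc P i j * (x i * x j) ≤ |P i j * (x i * x j)| := le_abs_self _
          _ = |P i j| * |x i * x j| := abs_mul _ _
          _ ≤ |P i j| * (x ⬝ᵥ x) := mul_le_mul_of_nonneg_left (habs i j) (abs_nonneg _)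
    _ = (∑ i, ∑ j, |P i j|) * (x ⬝ᵥ x) := by
        rw [Finset.sum_mul]
        exact Finset.sum_congr rfl fun i _ => (Finset.sum_mul _ _ _).symm

end quad

theorem stmt_3 {n : ℕ} (A : Matrix (Fin n) (Fin n) ℝ)
    (hA : IsSchur A) (ε : ℝ) (hε : 0 < ε) :
    ∃ (W : Matrix (Fin n ⊕ Fin n) (Fin n ⊕ Fin n) ℝ) (V : Matrix (Fin n) (Fin n) ℝ),
      let S := Wᵀ * W + ε • (1 : Matrix (Fin n ⊕ Fin n) (Fin n ⊕ Fin n) ℝ)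
      IsUnit (S.toBlocks₁₁ + V - Vᵀ) ∧ IsUnit S.toBlocks₂₂ ∧
        A = (1 : Matrix (Fin n) (Fin n) ℝ) -
          (2 : ℝ) • ((S.toBlocks₁₁ + V - Vᵀ)⁻¹ * S.toBlocks₁₂ * (S.toBlocks₂₂)⁻¹ * S.toBlocks₂₁) := by
  classical
  obtain ⟨P, hPsymm, hPge, hPnn, hlyap⟩ := exists_lyapunov hA
  set C : Matrix (Fin n) (Fin n) ℝ := 1 - A with hCdef
  -- invertibility of C = 1 - A
  have hCzero : ∀ v, C *ᵥ v = 0 → v = 0 := by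
    intro v hv
    have hAv : A *ᵥ v = v := by
      have h0 : (1 : Matrix (Fin n) (Fin n) ℝ) *ᵥ v - A *ᵥ v = 0 := by
        rw [← Matrix.sub_mulVec]; exact hv
      have h1 := sub_eq_zero.mp h0
      rw [Matrix.one_mulVec] at h1
      exact h1.symm
    have h1 : v ⬝ᵥ ((P - 1) *ᵥ v) = v ⬝ᵥ (P *ᵥ v) := by
      rw [← hlyap, Matrix.mul_assoc, ← Matrix.mulVec_mulVec, Matrix.dotProduct_mulVec,
        Matrix.vecMul_transpose, hAv, ← Matrix.mulVec_mulVec, hAv]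
    have h2 : v ⬝ᵥ ((P - 1) *ᵥ v) = v ⬝ᵥ (P *ᵥ v) - v ⬝ᵥ v := by
      rw [Matrix.sub_mulVec, dotProduct_sub, Matrix.one_mulVec]
    have h3 : v ⬝ᵥ v = 0 := by
      have := h1.symm.trans h2; linarith
    by_contra hv0
    exact absurd h3 (ne_of_gt (dp_pos hv0))
  have hCdet : IsUnit C.det := by
    rw [isUnit_iff_ne_zero]
    intro h0
    obtain ⟨v, hv0, hv⟩ := (Matrix.exists_mulVec_eq_zero_iff).mpr h0
    exact hv0 (hCzero v hv)
  set B : Matrix (Fin n) (Fin n) ℝ := C⁻¹ with hBdef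
  have hCB : C * B = 1 := Matrix.mul_nonsing_inv _ hCdet
  have hBC : B * C = 1 := Matrix.nonsing_inv_mul _ hCdet
  have hBdet : B.det ≠ 0 := by
    rw [hBdef, Matrix.det_nonsing_inv, Ring.inverse_eq_inv]
    exact inv_ne_zero (isUnit_iff_ne_zero.mp hCdet)
  have hPherm : P.IsHermitian := by
    rw [Matrix.IsHermitian, Matrix.conjTranspose_eq_transpose_of_trivial, hPsymm]
  have hPpd : P.PosDef := by
    refine .of_dotProduct_mulVec_pos hPherm fun x hx => ?_
    have := lt_of_lt_of_le (dp_pos hx) (hPge x)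
    simpa using this
  have hPdet : P.det ≠ 0 := hPpd.det_pos.ne'
  have hPP : P * P⁻¹ = 1 := Matrix.mul_nonsing_inv _ (isUnit_iff_ne_zero.mpr hPdet)
  have hPinvP : P⁻¹ * P = 1 := Matrix.nonsing_inv_mul _ (isUnit_iff_ne_zero.mpr hPdet)
  -- key identity
  have E1 : Cᵀ * P + P * C - Cᵀ * P * C = 1 := by
    have expand : Cᵀ * P + P * C - Cᵀ * P * C = P - Aᵀ * P * A := by
      rw [hCdef, Matrix.transpose_sub, Matrix.transpose_one]
      noncomm_ring
    rw [expand, hlyap, sub_sub_cancel]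
  have habs : ∀ M : Matrix (Fin n) (Fin n) ℝ, Bᵀ * (Cᵀ * M) = M := by
    intro M
    rw [← Matrix.mul_assoc, ← Matrix.transpose_mul, hCB, Matrix.transpose_one, Matrix.one_mul]
  have key : P * B + Bᵀ * P = P + Bᵀ * B := by
    have h := congrArg (fun M : Matrix (Fin n) (Fin n) ℝ => Bᵀ * (M * B)) E1
    simp only [Matrix.add_mul, Matrix.sub_mul, Matrix.mul_add, Matrix.mul_sub,
      Matrix.mul_assoc, Matrix.one_mul] at h
    rw [hCB] at h
    simp only [Matrix.mul_one] at h
    rw [habs (P * B), habs P] at h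
    have h2 := sub_eq_iff_eq_add.mp h
    rw [h2]
    abel
  set M0 : Matrix (Fin n) (Fin n) ℝ := P * B with hM0
  -- scalars
  obtain ⟨e, he⟩ : ∃ e : ℝ, e = (∑ i, ∑ j, (C i j) ^ 2) + 1 := ⟨_, rfl⟩
  have he1 : 1 ≤ e := by
    have : (0:ℝ) ≤ ∑ i, ∑ j, (C i j) ^ 2 :=
      Finset.sum_nonneg fun i _ => Finset.sum_nonneg fun j _ => sq_nonneg _
    rw [he]; linarith
  have hBlow : ∀ x : Fin n → ℝ, x ⬝ᵥ x ≤ e * ((B *ᵥ x) ⬝ᵥ (B *ᵥ x)) := by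
    intro x
    have h1 : x = C *ᵥ (B *ᵥ x) := by
      rw [Matrix.mulVec_mulVec, hCB, Matrix.one_mulVec]
    calc x ⬝ᵥ x = (C *ᵥ (B *ᵥ x)) ⬝ᵥ (C *ᵥ (B *ᵥ x)) := by rw [← h1]
      _ ≤ (∑ i, ∑ j, (C i j) ^ 2) * ((B *ᵥ x) ⬝ᵥ (B *ᵥ x)) := mulVec_dp_le _ _
      _ ≤ e * ((B *ᵥ x) ⬝ᵥ (B *ᵥ x)) := by
          apply mul_le_mul_of_nonneg_right _ (dpnn _)
          rw [he]; linarith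
  obtain ⟨d, hd⟩ : ∃ d : ℝ, d = (∑ i, ∑ j, |P i j|) + 1 := ⟨_, rfl⟩
  have hd1 : 1 ≤ d := by
    have : (0:ℝ) ≤ ∑ i, ∑ j, |P i j| :=
      Finset.sum_nonneg fun i _ => Finset.sum_nonneg fun j _ => abs_nonneg _
    rw [hd]; linarith
  have hPub : ∀ x : Fin n → ℝ, x ⬝ᵥ (P *ᵥ x) ≤ d * (x ⬝ᵥ x) := by
    intro x
    refine le_trans (quad_ub P x) ?_
    apply mul_le_mul_of_nonneg_right _ (dpnn x)
    rw [hd]; linarith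
  obtain ⟨t, ht⟩ : ∃ t : ℝ, t = 4 * ε * e := ⟨_, rfl⟩
  have ht0 : 0 < t := by
    have he0 : (0:ℝ) < e := by linarith
    have h := mul_pos hε he0
    rw [ht]; linarith
  obtain ⟨τ2, hτ2⟩ : ∃ τ2 : ℝ, τ2 = t * d / 2 + 1 := ⟨_, rfl⟩
  have hτ20 : 0 < τ2 := by
    have htd : 0 < t * d := mul_pos ht0 (by linarith)
    rw [hτ2]; linarith
  obtain ⟨z, hz⟩ : ∃ z : ℝ, z = t * (τ2 + ε) / (2 * τ2) := ⟨_, rfl⟩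
  have hz0 : 0 < z := by
    rw [hz]
    exact div_pos (mul_pos ht0 (by linarith)) (by linarith)
  -- the PSD matrix U
  set U : Matrix (Fin n) (Fin n) ℝ :=
    (t/2) • (Bᵀ * B) - (t * ε / (2 * τ2)) • P - ε • (1 : Matrix (Fin n) (Fin n) ℝ) with hU
  have hUsym : Uᵀ = U := by
    rw [hU]
    simp [Matrix.transpose_sub, Matrix.transpose_smul, Matrix.transpose_mul,
      Matrix.transpose_one, Matrix.transpose_transpose, hPsymm]
  have hUquad : ∀ x : Fin n → ℝ, 0 ≤ x ⬝ᵥ (U *ᵥ x) := by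
    intro x
    have hBtB : x ⬝ᵥ ((Bᵀ * B) *ᵥ x) = (B *ᵥ x) ⬝ᵥ (B *ᵥ x) := by
      rw [← Matrix.mulVec_mulVec, Matrix.dotProduct_mulVec, Matrix.vecMul_transpose]
    have expand : x ⬝ᵥ (U *ᵥ x) =
        (t/2) * ((B *ᵥ x) ⬝ᵥ (B *ᵥ x)) - (t * ε / (2 * τ2)) * (x ⬝ᵥ (P *ᵥ x))
          - ε * (x ⬝ᵥ x) := by
      rw [hU, Matrix.sub_mulVec, Matrix.sub_mulVec, dotProduct_sub, dotProduct_sub,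
        Matrix.smul_mulVec, Matrix.smul_mulVec, Matrix.smul_mulVec,
        dotProduct_smul, dotProduct_smul, dotProduct_smul, Matrix.one_mulVec, hBtB,
        smul_eq_mul, smul_eq_mul, smul_eq_mul]
    rw [expand]
    have i1 := hBlow x
    have i2 := hPub x
    have i3 := dpnn x
    have i4 : 0 ≤ (B *ᵥ x) ⬝ᵥ (B *ᵥ x) := dpnn _
    have i5 := hPnn x
    have g1 : 2 * ε * (x ⬝ᵥ x) ≤ (t/2) * ((B *ᵥ x) ⬝ᵥ (B *ᵥ x)) := by
      calc 2 * ε * (x ⬝ᵥ x) ≤ 2 * ε * (e * ((B *ᵥ x) ⬝ᵥ (B *ᵥ x))) :=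
            mul_le_mul_of_nonneg_left i1 (by positivity)
        _ = (t/2) * ((B *ᵥ x) ⬝ᵥ (B *ᵥ x)) := by rw [ht]; ring
    have g2 : (t * ε / (2 * τ2)) * (x ⬝ᵥ (P *ᵥ x)) ≤ ε * (x ⬝ᵥ x) := by
      have c2nn : 0 ≤ t * ε / (2 * τ2) :=
        div_nonneg (mul_nonneg ht0.le hε.le) (by linarith)
      have k1 : t * d / (2 * τ2) ≤ 1 := by
        rw [div_le_one (by linarith : (0:ℝ) < 2 * τ2)]
        linarith
      calc (t * ε / (2 * τ2)) * (x ⬝ᵥ (P *ᵥ x))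
          ≤ (t * ε / (2 * τ2)) * (d * (x ⬝ᵥ x)) := mul_le_mul_of_nonneg_left i2 c2nn
        _ = (t * d / (2 * τ2)) * (ε * (x ⬝ᵥ x)) := by ring
        _ ≤ 1 * (ε * (x ⬝ᵥ x)) := mul_le_mul_of_nonneg_right k1 (by positivity)
        _ = ε * (x ⬝ᵥ x) := one_mul _
    linarith
  have hUherm : U.IsHermitian := by
    rw [Matrix.IsHermitian, Matrix.conjTranspose_eq_transpose_of_trivial, hUsym]
  have hUpsd : U.PosSemidef := .of_dotProduct_mulVec_nonneg hUherm hUquad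
  have hzPherm : (z • P).IsHermitian := by
    rw [Matrix.IsHermitian, Matrix.conjTranspose_eq_transpose_of_trivial,
      Matrix.transpose_smul, hPsymm]
  have hzPpsd : (z • P).PosSemidef := by
    refine .of_dotProduct_mulVec_nonneg hzPherm fun x => ?_
    have : 0 ≤ z * (x ⬝ᵥ (P *ᵥ x)) := mul_nonneg hz0.le (hPnn x)
    simpa [Matrix.smul_mulVec, smul_eq_mul] using this
  set X : Matrix (Fin n) (Fin n) ℝ := (open scoped MatrixOrder in CFC.sqrt U) with hX
  set Z : Matrix (Fin n) (Fin n) ℝ := (open scoped MatrixOrder in CFC.sqrt (z • P)) with hZ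
  have hXX : X * X = U := by
    open scoped MatrixOrder in exact CFC.sqrt_mul_sqrt_self U hUpsd.nonneg
  have hZZ : Z * Z = z • P := by
    open scoped MatrixOrder in exact CFC.sqrt_mul_sqrt_self (z • P) hzPpsd.nonneg
  have hXsym : Xᵀ = X := by
    have h : X.IsHermitian := by
      open scoped MatrixOrder in exact (CFC.sqrt_nonneg U).posSemidef.isHermitian
    rwa [Matrix.IsHermitian, Matrix.conjTranspose_eq_transpose_of_trivial] at h
  have hZsym : Zᵀ = Z := by
    have h : Z.IsHermitian := by
      open scoped MatrixOrder in exact (CFC.sqrt_nonneg (z • P)).posSemidef.isHermitian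
    rwa [Matrix.IsHermitian, Matrix.conjTranspose_eq_transpose_of_trivial] at h
  set T : Matrix (Fin n) (Fin n) ℝ := Real.sqrt τ2 • (1 : Matrix (Fin n) (Fin n) ℝ) with hT
  set W : Matrix (Fin n ⊕ Fin n) (Fin n ⊕ Fin n) ℝ := Matrix.fromBlocks X 0 Z T with hW
  set V : Matrix (Fin n) (Fin n) ℝ := (t/2) • M0 with hV
  -- the blocks of S
  have hS : Wᵀ * W + ε • (1 : Matrix (Fin n ⊕ Fin n) (Fin n ⊕ Fin n) ℝ) =
      Matrix.fromBlocks ((t/2) • (M0 + M0ᵀ)) (Real.sqrt τ2 • Z) (Real.sqrt τ2 • Z)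
        ((τ2 + ε) • 1) := by
    rw [hW, Matrix.fromBlocks_transpose, Matrix.fromBlocks_multiply]
    rw [show (1 : Matrix (Fin n ⊕ Fin n) (Fin n ⊕ Fin n) ℝ) = Matrix.fromBlocks 1 0 0 1 from
      Matrix.fromBlocks_one.symm]
    rw [Matrix.fromBlocks_smul, Matrix.fromBlocks_add]
    rw [hXsym, hXX, hZsym, hZZ]
    simp only [Matrix.mul_zero, Matrix.zero_mul, smul_zero, add_zero, zero_add,
      Matrix.transpose_zero]
    have hM0t : M0ᵀ = Bᵀ * P := by rw [hM0, Matrix.transpose_mul, hPsymm]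
    have b11 : U + z • P + ε • (1 : Matrix (Fin n) (Fin n) ℝ) = (t/2) • (M0 + M0ᵀ) := by
      have hMM : M0 + M0ᵀ = P + Bᵀ * B := by rw [hM0t]; exact key
      have hzsplit : z = t/2 + t * ε / (2 * τ2) := by
        rw [hz]; field_simp
      rw [hMM, hU, hzsplit]
      module
    have b12 : Z * T = Real.sqrt τ2 • Z := by
      rw [hT, Matrix.mul_smul, Matrix.mul_one]
    have b21 : Tᵀ * Z = Real.sqrt τ2 • Z := by
      rw [hT, Matrix.transpose_smul, Matrix.transpose_one, Matrix.smul_mul, Matrix.one_mul]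
    have b22 : Tᵀ * T + ε • (1 : Matrix (Fin n) (Fin n) ℝ) = (τ2 + ε) • 1 := by
      rw [hT, Matrix.transpose_smul, Matrix.transpose_one, Matrix.smul_mul, Matrix.mul_smul,
        Matrix.one_mul, smul_smul, Real.mul_self_sqrt hτ20.le, ← add_smul]
    rw [b11, b12, b21, b22]
  -- the first block combination
  have hSV : ((t/2) • (M0 + M0ᵀ)) + V - Vᵀ = t • M0 := by
    rw [hV, Matrix.transpose_smul]
    module
  have hdetM : IsUnit (t • M0).det := by
    rw [Matrix.det_smul, hM0, Matrix.det_mul, isUnit_iff_ne_zero]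
    exact mul_ne_zero (pow_ne_zero _ ht0.ne') (mul_ne_zero hPdet hBdet)
  have hS22unit : IsUnit ((τ2 + ε) • (1 : Matrix (Fin n) (Fin n) ℝ)) := by
    rw [Matrix.isUnit_iff_isUnit_det, Matrix.det_smul, Matrix.det_one, mul_one,
      isUnit_iff_ne_zero]
    exact pow_ne_zero _ (by linarith)
  have hS22inv : ((τ2 + ε) • (1 : Matrix (Fin n) (Fin n) ℝ))⁻¹ = (τ2 + ε)⁻¹ • 1 := by
    apply Matrix.inv_eq_right_inv
    rw [Matrix.smul_mul, Matrix.mul_smul, Matrix.one_mul, smul_smul,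
      mul_inv_cancel₀ (by linarith : τ2 + ε ≠ 0), one_smul]
  have hMinv : (t • M0)⁻¹ = t⁻¹ • (C * P⁻¹) := by
    apply Matrix.inv_eq_right_inv
    rw [Matrix.smul_mul, Matrix.mul_smul, smul_smul, mul_inv_cancel₀ ht0.ne', one_smul, hM0,
      Matrix.mul_assoc P B (C * P⁻¹), ← Matrix.mul_assoc B C P⁻¹, hBC, Matrix.one_mul, hPP]
  have hfin : (t • M0)⁻¹ * (Real.sqrt τ2 • Z) * ((τ2 + ε) • (1 : Matrix (Fin n) (Fin n) ℝ))⁻¹ *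
      (Real.sqrt τ2 • Z) = (2:ℝ)⁻¹ • C := by
    rw [hMinv, hS22inv]
    simp only [Matrix.smul_mul, Matrix.mul_smul, Matrix.mul_one, smul_smul]
    rw [Matrix.mul_assoc (C * P⁻¹) Z Z, hZZ, Matrix.mul_smul, Matrix.mul_assoc C P⁻¹ P,
      hPinvP, Matrix.mul_one, smul_smul]
    congr 1
    have hss : Real.sqrt τ2 * Real.sqrt τ2 = τ2 := Real.mul_self_sqrt hτ20.le
    rw [hz]
    field_simp
    nlinarith [hss]
  refine ⟨W, V, ?_, ?_, ?_⟩
  · show IsUnit ((Wᵀ * W + ε • 1).toBlocks₁₁ + V - Vᵀ)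
    rw [hS, Matrix.toBlocks_fromBlocks₁₁, hSV, Matrix.isUnit_iff_isUnit_det]
    exact hdetM
  · show IsUnit ((Wᵀ * W + ε • 1).toBlocks₂₂)
    rw [hS, Matrix.toBlocks_fromBlocks₂₂]
    exact hS22unit
  · show A = 1 - (2:ℝ) • (((Wᵀ * W + ε • 1).toBlocks₁₁ + V - Vᵀ)⁻¹ *
      (Wᵀ * W + ε • 1).toBlocks₁₂ * ((Wᵀ * W + ε • 1).toBlocks₂₂)⁻¹ *
      (Wᵀ * W + ε • 1).toBlocks₂₁)
    rw [hS, Matrix.toBlocks_fromBlocks₁₁, Matrix.toBlocks_fromBlocks₁₂,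
      Matrix.toBlocks_fromBlocks₂₁, Matrix.toBlocks_fromBlocks₂₂, hSV, hfin, smul_smul]
    norm_num
    rw [sub_sub_cancel]
end

section
/- Let M ∈ {0,1}^{n×n} be a sparsity pattern, let W ∈ ℝ^{2n×2n}, V ∈ ℝ^{n×n}, and ε > 0. Set S := WᵀW + ε·I_{2n}, and let N ∈ ℝ^{n×n} be the diagonal matrix with diagonal entries N_{ii} := max{ Σ_{j=1}^n M_{ij}, Σ_{j=1}^n M_{ji} } + ε for all i = 1,…,n. Then the matrix N ⊙ ((1/2)·(S₁₁ + S₂₂) + V − Vᵀ) is invertible, and the matrix A := M ⊙ ( S₁₂ · [ N ⊙ ((1/2)·(S₁₁ + S₂₂) + V − Vᵀ) ]⁻¹ ) is a Schur matrix whose entries satisfy A_{ij} = 0 whenever M_{ij} = 0 (i.e., A has the sparsity pattern M). -/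
open Matrix Polynomial

/-- Weighted Gershgorin bound: if every weighted row sum of absolute values is
strictly less than the weight, then every eigenvalue has modulus `< 1`. -/
lemma abs_eig_lt_one_of_row_dom {n : ℕ} (B : Matrix (Fin n) (Fin n) ℂ) (w : Fin n → ℝ)
    (hw : ∀ j, 0 < w j)
    (hB : ∀ i, ∑ j, ‖B i j‖ * w j < w i)
    {μ : ℂ} {x : Fin n → ℂ} (hx : x ≠ 0) (heig : B.mulVec x = μ • x) :
    ‖μ‖ < 1 := by
  obtain ⟨j0, hj0⟩ : ∃ j, x j ≠ 0 := by
    by_contra h; push_neg at h; exact hx (funext h)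
  obtain ⟨i, -, hi⟩ := Finset.exists_max_image Finset.univ
    (fun j => ‖x j‖ / w j) ⟨j0, Finset.mem_univ _⟩
  have hfi : 0 < ‖x i‖ / w i :=
    lt_of_lt_of_le (div_pos (norm_pos_iff.mpr hj0) (hw j0)) (hi j0 (Finset.mem_univ _))
  have hxi : 0 < ‖x i‖ := by
    have := mul_pos hfi (hw i)
    rwa [div_mul_cancel₀ _ (hw i).ne'] at this
  have h1 : μ * x i = ∑ j, B i j * x j := by
    have := congrFun heig i
    simpa [Matrix.mulVec, dotProduct, Pi.smul_apply, smul_eq_mul] using this.symm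
  have key : ‖μ‖ * ‖x i‖ < ‖x i‖ := by
    calc ‖μ‖ * ‖x i‖ = ‖μ * x i‖ := (norm_mul _ _).symm
      _ = ‖∑ j, B i j * x j‖ := by rw [h1]
      _ ≤ ∑ j, ‖B i j * x j‖ := norm_sum_le _ _
      _ = ∑ j, ‖B i j‖ * ‖x j‖ := by simp [norm_mul]
      _ ≤ ∑ j, ‖B i j‖ * (w j * (‖x i‖ / w i)) := by
          refine Finset.sum_le_sum fun j _ => ?_
          refine mul_le_mul_of_nonneg_left ?_ (norm_nonneg _)
          have := hi j (Finset.mem_univ _)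
          rw [div_le_div_iff₀ (hw j) (hw i)] at this
          rw [mul_comm (w j), div_mul_eq_mul_div, le_div_iff₀ (hw i)]
          linarith
      _ = (∑ j, ‖B i j‖ * w j) * (‖x i‖ / w i) := by
          rw [Finset.sum_mul]; exact Finset.sum_congr rfl fun j _ => by ring
      _ < w i * (‖x i‖ / w i) := mul_lt_mul_of_pos_right (hB i) hfi
      _ = ‖x i‖ := by
          rw [mul_div_assoc']; exact mul_div_cancel_left₀ _ (hw i).ne'
  exact (mul_lt_iff_lt_one_left hxi).mp key

/-- A root of the characteristic polynomial admits an eigenvector. -/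
lemma exists_eigvec_of_isRoot_charpoly {n : ℕ} (B : Matrix (Fin n) (Fin n) ℂ) {μ : ℂ}
    (h : B.charpoly.IsRoot μ) : ∃ x : Fin n → ℂ, x ≠ 0 ∧ B.mulVec x = μ • x := by
  have h2 : (charmatrix B).map (Polynomial.eval μ) = μ • (1 : Matrix (Fin n) (Fin n) ℂ) - B := by
    ext i j
    by_cases hij : i = j
    · subst hij
      simp [Matrix.map_apply, charmatrix_apply_eq]
    · simp [Matrix.map_apply, charmatrix_apply_ne _ _ _ hij, Matrix.one_apply_ne hij, hij]
  have hdet : (μ • (1 : Matrix (Fin n) (Fin n) ℂ) - B).det = 0 := by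
    rw [← h2]
    have h3 := RingHom.map_det (Polynomial.evalRingHom μ) (charmatrix B)
    have : Polynomial.eval μ B.charpoly = 0 := h
    rw [Matrix.charpoly] at this
    rw [RingHom.mapMatrix_apply] at h3
    rw [show ((charmatrix B).map (Polynomial.eval μ)) = (charmatrix B).map (Polynomial.evalRingHom μ) from rfl, ← h3]
    exact this
  obtain ⟨v, hv0, hv⟩ := (Matrix.exists_mulVec_eq_zero_iff).mpr hdet
  refine ⟨v, hv0, ?_⟩
  have := hv
  rw [Matrix.sub_mulVec, Matrix.smul_mulVec, Matrix.one_mulVec, sub_eq_zero] at this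
  exact this.symm

theorem stmt_4 {n : ℕ} (M : Matrix (Fin n) (Fin n) ℝ)
    (hM : ∀ i j, M i j = 0 ∨ M i j = 1)
    (W : Matrix (Fin n ⊕ Fin n) (Fin n ⊕ Fin n) ℝ)
    (V : Matrix (Fin n) (Fin n) ℝ) (ε : ℝ) (hε : 0 < ε) :
    let S := Wᵀ * W + ε • (1 : Matrix (Fin n ⊕ Fin n) (Fin n ⊕ Fin n) ℝ)
    let N : Matrix (Fin n) (Fin n) ℝ :=
      Matrix.diagonal fun i => max (∑ j, M i j) (∑ j, M j i) + ε
    let T := N ⊙ ((1 / 2 : ℝ) • (S.toBlocks₁₁ + S.toBlocks₂₂) + V - Vᵀ)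
    let A := M ⊙ (S.toBlocks₁₂ * T⁻¹)
    IsUnit T ∧ IsSchur A ∧ ∀ i j, M i j = 0 → A i j = 0 := by
  intro S N T A
  have hMnn : ∀ i j, 0 ≤ M i j := by
    intro i j; rcases hM i j with h | h <;> rw [h] <;> norm_num
  have hS : S = Wᵀ * W + ε • (1 : Matrix (Fin n ⊕ Fin n) (Fin n ⊕ Fin n) ℝ) := rfl
  have hSapp : ∀ a b, S a b = (∑ k, W k a * W k b) + ε * (if a = b then 1 else 0) := by
    intro a b
    rw [hS]
    simp [Matrix.add_apply, Matrix.mul_apply, Matrix.transpose_apply, Matrix.smul_apply,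
      Matrix.one_apply]
  have hs_eq : ∀ i, S.toBlocks₁₁ i i = (∑ k, W k (Sum.inl i) * W k (Sum.inl i)) + ε := by
    intro i
    show S (Sum.inl i) (Sum.inl i) = _
    rw [hSapp]; simp
  have ht_eq : ∀ i, S.toBlocks₂₂ i i = (∑ k, W k (Sum.inr i) * W k (Sum.inr i)) + ε := by
    intro i
    show S (Sum.inr i) (Sum.inr i) = _
    rw [hSapp]; simp
  have h12_eq : ∀ i j, S.toBlocks₁₂ i j = ∑ k, W k (Sum.inl i) * W k (Sum.inr j) := by
    intro i j
    show S (Sum.inl i) (Sum.inr j) = _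
    rw [hSapp]; simp
  have hspos : ∀ i, 0 < S.toBlocks₁₁ i i := by
    intro i
    rw [hs_eq]
    have : (0:ℝ) ≤ ∑ k, W k (Sum.inl i) * W k (Sum.inl i) :=
      Finset.sum_nonneg fun k _ => mul_self_nonneg _
    linarith
  have htpos : ∀ i, 0 < S.toBlocks₂₂ i i := by
    intro i
    rw [ht_eq]
    have : (0:ℝ) ≤ ∑ k, W k (Sum.inr i) * W k (Sum.inr i) :=
      Finset.sum_nonneg fun k _ => mul_self_nonneg _
    linarith
  have hcs : ∀ i j, (S.toBlocks₁₂ i j)^2 ≤ S.toBlocks₁₁ i i * S.toBlocks₂₂ j j := by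
    intro i j
    rw [h12_eq, hs_eq, ht_eq]
    have h1 := Finset.sum_mul_sq_le_sq_mul_sq Finset.univ
      (fun k => W k (Sum.inl i)) (fun k => W k (Sum.inr j))
    have e2 : ∑ k, W k (Sum.inl i) ^ 2 = ∑ k, W k (Sum.inl i) * W k (Sum.inl i) := by
      simp [sq]
    have e3 : ∑ k, W k (Sum.inr j) ^ 2 = ∑ k, W k (Sum.inr j) * W k (Sum.inr j) := by
      simp [sq]
    rw [e2, e3] at h1
    have h2 : (0:ℝ) ≤ ∑ k, W k (Sum.inl i) * W k (Sum.inl i) :=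
      Finset.sum_nonneg fun k _ => mul_self_nonneg _
    have h3 : (0:ℝ) ≤ ∑ k, W k (Sum.inr j) * W k (Sum.inr j) :=
      Finset.sum_nonneg fun k _ => mul_self_nonneg _
    nlinarith [h1, h2, h3, hε]
  have habs12 : ∀ i j, |S.toBlocks₁₂ i j| ≤
      Real.sqrt (S.toBlocks₁₁ i i) * Real.sqrt (S.toBlocks₂₂ j j) := by
    intro i j
    rw [← Real.sqrt_sq_eq_abs, ← Real.sqrt_mul (hspos i).le]
    exact Real.sqrt_le_sqrt (hcs i j)
  -- the diagonal entries of T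
  set r : Fin n → ℝ := fun i => ∑ j, M i j with hr_def
  set c : Fin n → ℝ := fun i => ∑ j, M j i with hc_def
  set Nv : Fin n → ℝ := fun i => max (r i) (c i) + ε with hNv_def
  set g : Fin n → ℝ := fun i => (1/2 : ℝ) * (S.toBlocks₁₁ i i + S.toBlocks₂₂ i i) with hg_def
  set d : Fin n → ℝ := fun i => Nv i * g i with hd_def
  have hrnn : ∀ i, 0 ≤ r i := fun i => Finset.sum_nonneg fun j _ => hMnn i j
  have hr_lt : ∀ i, r i < Nv i := fun i =>
    lt_of_le_of_lt (le_max_left _ _) (lt_add_of_pos_right _ hε)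
  have hgpos : ∀ i, 0 < g i := by
    intro i
    have := hspos i; have := htpos i
    simp only [hg_def]; linarith
  have hdpos : ∀ i, 0 < d i := by
    intro i
    have h1 : 0 < Nv i := lt_of_le_of_lt (hrnn i) (hr_lt i)
    exact mul_pos h1 (hgpos i)
  have hN : N = Matrix.diagonal (fun i => Nv i) := rfl
  have hT : T = Matrix.diagonal d := by
    have hT0 : T = N ⊙ ((1 / 2 : ℝ) • (S.toBlocks₁₁ + S.toBlocks₂₂) + V - Vᵀ) := rfl
    rw [hT0, hN]
    ext i j
    rcases eq_or_ne i j with rfl | hij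
    · simp only [Matrix.hadamard_apply, Matrix.diagonal_apply_eq, Matrix.sub_apply,
        Matrix.add_apply, Matrix.smul_apply, Matrix.transpose_apply, smul_eq_mul,
        hd_def, hg_def]
      ring
    · simp [Matrix.hadamard_apply, Matrix.diagonal_apply_ne _ hij, hij]
  refine ⟨?_, ?_, ?_⟩
  · -- IsUnit T
    rw [hT, Matrix.isUnit_iff_isUnit_det, Matrix.det_diagonal]
    exact isUnit_iff_ne_zero.mpr (Finset.prod_pos fun i _ => hdpos i).ne'
  · -- IsSchur A
    have hTinv : T⁻¹ = Matrix.diagonal (fun i => (d i)⁻¹) := by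
      rw [hT]
      refine Matrix.inv_eq_right_inv ?_
      rw [Matrix.diagonal_mul_diagonal, ← Matrix.diagonal_one]
      have he : (fun i => d i * (d i)⁻¹) = fun _ : Fin n => (1:ℝ) :=
        funext fun i => mul_inv_cancel₀ (hdpos i).ne'
      rw [he]
    have hAapp : ∀ i j, A i j = M i j * (S.toBlocks₁₂ i j * (d j)⁻¹) := by
      intro i j
      have hA0 : A = M ⊙ (S.toBlocks₁₂ * T⁻¹) := rfl
      rw [hA0, Matrix.hadamard_apply, hTinv, Matrix.mul_diagonal]
    intro μ hroot
    rw [← Matrix.charpoly_map A (algebraMap ℝ ℂ)] at hroot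
    obtain ⟨x, hx0, hxe⟩ := exists_eigvec_of_isRoot_charpoly _ hroot
    refine abs_eig_lt_one_of_row_dom _
      (fun j => d j / Real.sqrt (S.toBlocks₂₂ j j)) ?_ ?_ hx0 hxe
    · intro j
      exact div_pos (hdpos j) (Real.sqrt_pos.mpr (htpos j))
    · intro i
      have hterm : ∀ j, ‖(A.map ⇑(algebraMap ℝ ℂ)) i j‖ *
          (d j / Real.sqrt (S.toBlocks₂₂ j j)) ≤ M i j * Real.sqrt (S.toBlocks₁₁ i i) := by
        intro j
        have hstp : 0 < Real.sqrt (S.toBlocks₂₂ j j) := Real.sqrt_pos.mpr (htpos j)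
        have e1 : ‖(A.map ⇑(algebraMap ℝ ℂ)) i j‖ = |A i j| := by
          simp [Matrix.map_apply]
        rw [e1, hAapp, abs_mul, abs_mul, abs_of_nonneg (hMnn i j), abs_inv,
          abs_of_nonneg (hdpos j).le]
        have heq : M i j * (|S.toBlocks₁₂ i j| * (d j)⁻¹) *
            (d j / Real.sqrt (S.toBlocks₂₂ j j)) =
            M i j * (|S.toBlocks₁₂ i j| / Real.sqrt (S.toBlocks₂₂ j j)) := by
          have h0 : (d j)⁻¹ * d j = 1 := inv_mul_cancel₀ (hdpos j).ne'
          rw [div_eq_mul_inv, div_eq_mul_inv]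
          calc M i j * (|S.toBlocks₁₂ i j| * (d j)⁻¹) *
                (d j * (Real.sqrt (S.toBlocks₂₂ j j))⁻¹)
              = M i j * |S.toBlocks₁₂ i j| * ((d j)⁻¹ * d j) *
                (Real.sqrt (S.toBlocks₂₂ j j))⁻¹ := by ring
            _ = M i j * (|S.toBlocks₁₂ i j| * (Real.sqrt (S.toBlocks₂₂ j j))⁻¹) := by
                rw [h0]; ring
        rw [heq]
        refine mul_le_mul_of_nonneg_left ?_ (hMnn i j)
        rw [div_le_iff₀ hstp]
        exact habs12 i j
      calc ∑ j, ‖(A.map ⇑(algebraMap ℝ ℂ)) i j‖ *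
            (d j / Real.sqrt (S.toBlocks₂₂ j j))
          ≤ ∑ j, M i j * Real.sqrt (S.toBlocks₁₁ i i) :=
            Finset.sum_le_sum fun j _ => hterm j
        _ = r i * Real.sqrt (S.toBlocks₁₁ i i) := by rw [← Finset.sum_mul]
        _ < d i / Real.sqrt (S.toBlocks₂₂ i i) := by
            rw [lt_div_iff₀ (Real.sqrt_pos.mpr (htpos i))]
            have h1 : Real.sqrt (S.toBlocks₁₁ i i) * Real.sqrt (S.toBlocks₂₂ i i) ≤ g i := by
              rw [← Real.sqrt_mul (hspos i).le]
              have h2 : Real.sqrt (S.toBlocks₁₁ i i * S.toBlocks₂₂ i i) ≤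
                  Real.sqrt (g i ^ 2) := by
                refine Real.sqrt_le_sqrt ?_
                simp only [hg_def]
                nlinarith [sq_nonneg (S.toBlocks₁₁ i i - S.toBlocks₂₂ i i)]
              rwa [Real.sqrt_sq (hgpos i).le] at h2
            have h3 := hr_lt i
            have h4 := hgpos i
            have h5 := hrnn i
            have hd_eq : d i = Nv i * g i := rfl
            rw [hd_eq]
            have p1 : r i * (Real.sqrt (S.toBlocks₁₁ i i) * Real.sqrt (S.toBlocks₂₂ i i)) ≤
                r i * g i := mul_le_mul_of_nonneg_left h1 h5
            have p2 : r i * g i < Nv i * g i := mul_lt_mul_of_pos_right h3 h4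
            nlinarith [p1, p2]
  · intro i j h
    have hA0 : A = M ⊙ (S.toBlocks₁₂ * T⁻¹) := rfl
    rw [hA0, Matrix.hadamard_apply, h, zero_mul]
end

section
/- Let A ∈ ℝ^{n×n} and let Q ∈ ℝ^{n×n} be symmetric positive definite. Then Q − A·Q·Aᵀ is positive definite if and only if there exists a matrix G ∈ ℝ^{n×n} such that the block matrix [[Q, A·G],[Gᵀ·Aᵀ, Gᵀ + G − Q]] ∈ ℝ^{2n×2n} is positive definite. -/
open Matrix

lemma myPD_iff {n : Type*} [Fintype n] {M : Matrix n n ℝ} :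
    M.PosDef ↔ M.IsHermitian ∧ ∀ x : n → ℝ, x ≠ 0 → 0 < star x ⬝ᵥ (M *ᵥ x) :=
  posDef_iff_dotProduct_mulVec

lemma myPD2 {n : Type*} [Fintype n] {M : Matrix n n ℝ} (h : M.PosDef) :
    ∀ x : n → ℝ, x ≠ 0 → 0 < star x ⬝ᵥ (M *ᵥ x) :=
  (myPD_iff.mp h).2

section aux
variable {m l : Type*} [Fintype m] [Fintype l] [DecidableEq m] [DecidableEq l]

lemma myPosDef_fromBlocks₁₁ {A : Matrix m m ℝ} (B : Matrix m l ℝ) (D : Matrix l l ℝ)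
    (hA : A.PosDef) [Invertible A] :
    (fromBlocks A B Bᴴ D).PosDef ↔ (D - Bᴴ * A⁻¹ * B).PosDef := by
  rw [myPD_iff (M := fromBlocks A B Bᴴ D), Matrix.IsHermitian.fromBlocks₁₁ _ _ hA.1]
  constructor
  · refine fun h => myPD_iff.mpr ⟨h.1, fun x hx => ?_⟩
    have hv : (-((A⁻¹ * B) *ᵥ x) ⊕ᵥ x) ≠ 0 :=
      fun h0 => hx (funext fun i => congrFun h0 (Sum.inr i))
    have := h.2 _ hv
    rw [dotProduct_mulVec, schur_complement_eq₁₁ B D _ _ hA.1, neg_add_cancel, dotProduct_zero,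
      zero_add] at this
    rw [dotProduct_mulVec]; exact this
  · refine fun h => ⟨h.1, fun x hx => ?_⟩
    rw [dotProduct_mulVec, ← Sum.elim_comp_inl_inr x, schur_complement_eq₁₁ B D _ _ hA.1]
    by_cases hy : x ∘ Sum.inr = 0
    · have hx1 : x ∘ Sum.inl ≠ 0 := by
        intro h0
        apply hx
        rw [← Sum.elim_comp_inl_inr x, h0, hy]
        ext (i | i) <;> rfl
      rw [hy]
      simp only [mulVec_zero, add_zero, star_zero, zero_dotProduct, dotProduct_zero, add_zero]
      rw [← dotProduct_mulVec]
      exact myPD2 hA _ hx1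
    · have h1 : (0:ℝ) ≤ (star (x ∘ Sum.inl + (A⁻¹ * B) *ᵥ (x ∘ Sum.inr))) ᵥ* A ⬝ᵥ
          (x ∘ Sum.inl + (A⁻¹ * B) *ᵥ (x ∘ Sum.inr)) := by
        rw [← dotProduct_mulVec]
        exact hA.posSemidef.dotProduct_mulVec_nonneg _
      have h2 : (0:ℝ) < (star (x ∘ Sum.inr)) ᵥ* (D - Bᴴ * A⁻¹ * B) ⬝ᵥ (x ∘ Sum.inr) := by
        rw [← dotProduct_mulVec]
        exact myPD2 h _ hy
      linarith

lemma myPosDef_fromBlocks₂₂ (A : Matrix m m ℝ) (B : Matrix m l ℝ) {D : Matrix l l ℝ}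
    (hD : D.PosDef) [Invertible D] :
    (fromBlocks A B Bᴴ D).PosDef ↔ (A - B * D⁻¹ * Bᴴ).PosDef := by
  rw [myPD_iff (M := fromBlocks A B Bᴴ D), Matrix.IsHermitian.fromBlocks₂₂ _ _ hD.1]
  constructor
  · refine fun h => myPD_iff.mpr ⟨h.1, fun x hx => ?_⟩
    have hv : (x ⊕ᵥ -((D⁻¹ * Bᴴ) *ᵥ x)) ≠ 0 :=
      fun h0 => hx (funext fun i => congrFun h0 (Sum.inl i))
    have := h.2 _ hv
    rw [dotProduct_mulVec, schur_complement_eq₂₂ A B _ _ hD.1, add_neg_cancel, dotProduct_zero,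
      zero_add] at this
    rw [dotProduct_mulVec]; exact this
  · refine fun h => ⟨h.1, fun x hx => ?_⟩
    rw [dotProduct_mulVec, ← Sum.elim_comp_inl_inr x, schur_complement_eq₂₂ A B _ _ hD.1]
    by_cases hy : x ∘ Sum.inl = 0
    · have hx1 : x ∘ Sum.inr ≠ 0 := by
        intro h0
        apply hx
        rw [← Sum.elim_comp_inl_inr x, h0, hy]
        ext (i | i) <;> rfl
      rw [hy]
      simp only [mulVec_zero, zero_add, star_zero, zero_dotProduct, dotProduct_zero, add_zero]
      rw [← dotProduct_mulVec]
      exact myPD2 hD _ hx1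
    · have h1 : (0:ℝ) ≤ (star ((D⁻¹ * Bᴴ) *ᵥ (x ∘ Sum.inl) + x ∘ Sum.inr)) ᵥ* D ⬝ᵥ
          ((D⁻¹ * Bᴴ) *ᵥ (x ∘ Sum.inl) + x ∘ Sum.inr) := by
        rw [← dotProduct_mulVec]
        exact hD.posSemidef.dotProduct_mulVec_nonneg _
      have h2 : (0:ℝ) < (star (x ∘ Sum.inl)) ᵥ* (A - B * D⁻¹ * Bᴴ) ⬝ᵥ (x ∘ Sum.inl) := by
        rw [← dotProduct_mulVec]
        exact myPD2 h _ hy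
      linarith

lemma myPosDef_conj {A : Matrix m m ℝ} (hA : A.PosDef) {B : Matrix m m ℝ} (hB : IsUnit B) :
    (Bᴴ * A * B).PosDef := by
  refine myPD_iff.mpr ⟨isHermitian_conjTranspose_mul_mul B hA.1, fun x hx => ?_⟩
  have hBx : B *ᵥ x ≠ 0 := by
    intro h0
    exact hx <| (Matrix.mulVec_injective_iff_isUnit.mpr hB) (by simpa using h0)
  simpa only [star_mulVec, dotProduct_mulVec, vecMul_vecMul] using myPD2 hA (B *ᵥ x) hBx

end aux

section aux2
variable {m : Type*} [Fintype m] [DecidableEq m]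

lemma myPosDef_toBlocks₂₂ {l : Type*} [Fintype l] {A : Matrix m m ℝ} {B : Matrix m l ℝ}
    {C : Matrix l m ℝ} {D : Matrix l l ℝ} (h : (fromBlocks A B C D).PosDef) : D.PosDef := by
  refine myPD_iff.mpr ⟨(isHermitian_fromBlocks_iff.mp h.1).2.2.2, fun y hy => ?_⟩
  have := myPD2 h ((0 : m → ℝ) ⊕ᵥ y) (fun h0 => hy (funext fun i => congrFun h0 (Sum.inr i)))
  simpa [fromBlocks_mulVec, dotProduct, Fintype.sum_sum_type] using this

lemma myKey {A Q : Matrix m m ℝ} (hQ : Q.PosDef) :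
    (Q - A * Q * Aᵀ).PosDef ↔ (Q⁻¹ - Aᵀ * Q⁻¹ * A).PosDef := by
  have hdet : IsUnit Q.det := (isUnit_iff_isUnit_det Q).mp hQ.isUnit
  haveI : Invertible Q := Q.invertibleOfIsUnitDet hdet
  haveI : Invertible Q⁻¹ := Q⁻¹.invertibleOfIsUnitDet (Q.isUnit_nonsing_inv_det hdet)
  have hAT : (Aᵀ)ᴴ = A := by
    rw [conjTranspose_eq_transpose_of_trivial, transpose_transpose]
  have h1 := myPosDef_fromBlocks₁₁ (A := Q⁻¹) Aᵀ Q hQ.inv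
  have h2 := myPosDef_fromBlocks₂₂ (D := Q) Q⁻¹ Aᵀ hQ
  rw [hAT] at h1 h2
  rw [Matrix.nonsing_inv_nonsing_inv Q hdet] at h1
  exact h1.symm.trans h2

end aux2

theorem stmt_7 {n : ℕ} (A Q : Matrix (Fin n) (Fin n) ℝ) (hQ : Q.PosDef) :
    (Q - A * Q * Aᵀ).PosDef ↔
      ∃ G : Matrix (Fin n) (Fin n) ℝ,
        (Matrix.fromBlocks Q (A * G) (Gᵀ * Aᵀ) (Gᵀ + G - Q)).PosDef := by
  have hdet : IsUnit Q.det := (isUnit_iff_isUnit_det Q).mp hQ.isUnit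
  haveI : Invertible Q := Q.invertibleOfIsUnitDet hdet
  have hQT : Qᵀ = Q := by
    rw [← conjTranspose_eq_transpose_of_trivial]; exact hQ.1
  constructor
  · intro hL
    refine ⟨Q, ?_⟩
    have hCt : Qᵀ * Aᵀ = (A * Q)ᴴ := by
      rw [conjTranspose_mul, conjTranspose_eq_transpose_of_trivial,
        conjTranspose_eq_transpose_of_trivial]
    rw [hCt, hQT, add_sub_cancel_right]
    rw [myPosDef_fromBlocks₁₁ (A * Q) Q hQ]
    have hK : (Q⁻¹ - Aᵀ * Q⁻¹ * A).PosDef := (myKey hQ).mp hL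
    have hc := myPosDef_conj hK hQ.isUnit
    have hEq : Qᴴ * (Q⁻¹ - Aᵀ * Q⁻¹ * A) * Q = Q - (A * Q)ᴴ * Q⁻¹ * (A * Q) := by
      rw [conjTranspose_mul, conjTranspose_eq_transpose_of_trivial,
        conjTranspose_eq_transpose_of_trivial, hQT]
      simp only [Matrix.mul_sub, Matrix.sub_mul, Matrix.mul_assoc,
        Matrix.nonsing_inv_mul Q hdet, Matrix.mul_one]
    rwa [hEq] at hc
  · rintro ⟨G, hG⟩
    have hCt : Gᵀ * Aᵀ = (A * G)ᴴ := by
      rw [conjTranspose_mul, conjTranspose_eq_transpose_of_trivial,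
        conjTranspose_eq_transpose_of_trivial]
    rw [hCt] at hG
    have hD : (Gᵀ + G - Q).PosDef := myPosDef_toBlocks₂₂ hG
    have hSchur : ((Gᵀ + G - Q) - (A * G)ᴴ * Q⁻¹ * (A * G)).PosDef :=
      (myPosDef_fromBlocks₁₁ (A * G) _ hQ).mp hG
    have hsum : (Gᵀ + G).PosDef := by
      have := hD.add hQ
      rwa [sub_add_cancel] at this
    have hGunit : IsUnit G := by
      rw [← Matrix.mulVec_injective_iff_isUnit]
      intro a b hab
      by_contra hne
      have hx : a - b ≠ 0 := sub_ne_zero.mpr hne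
      have hGx : G *ᵥ (a - b) = 0 := by rw [mulVec_sub, hab, sub_self]
      have hpos := myPD2 hsum (a - b) hx
      rw [add_mulVec, dotProduct_add, hGx, dotProduct_zero, add_zero,
        dotProduct_mulVec, vecMul_transpose] at hpos
      simp only [star_trivial] at hpos
      rw [hGx, zero_dotProduct] at hpos
      exact lt_irrefl 0 hpos
    have hGdet : IsUnit G.det := (isUnit_iff_isUnit_det G).mp hGunit
    haveI : Invertible G := G.invertibleOfIsUnitDet hGdet
    have hPSD : ((G - Q)ᴴ * Q⁻¹ * (G - Q)).PosSemidef :=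
      hQ.inv.posSemidef.conjTranspose_mul_mul_same _
    have hEq : Gᴴ * (Q⁻¹ - Aᵀ * Q⁻¹ * A) * G =
        ((Gᵀ + G - Q) - (A * G)ᴴ * Q⁻¹ * (A * G)) + (G - Q)ᴴ * Q⁻¹ * (G - Q) := by
      simp only [conjTranspose_mul, conjTranspose_sub, conjTranspose_eq_transpose_of_trivial,
        transpose_sub, transpose_mul, hQT]
      simp only [Matrix.mul_sub, Matrix.sub_mul, Matrix.add_mul, Matrix.mul_add,
        Matrix.mul_assoc, Matrix.nonsing_inv_mul Q hdet, Matrix.mul_one,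
        Matrix.mul_nonsing_inv_cancel_left Q _ hdet]
      abel
    have hT : (Gᴴ * (Q⁻¹ - Aᵀ * Q⁻¹ * A) * G).PosDef := by
      rw [hEq]; exact hSchur.add_posSemidef hPSD
    have hc := myPosDef_conj hT (Matrix.isUnit_nonsing_inv_iff.mpr hGunit)
    have hEq2 : (G⁻¹)ᴴ * (Gᴴ * (Q⁻¹ - Aᵀ * Q⁻¹ * A) * G) * G⁻¹ = Q⁻¹ - Aᵀ * Q⁻¹ * A := by
      have hGHdet : IsUnit Gᴴ.det := by
        rw [det_conjTranspose]; exact hGdet.star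
      rw [conjTranspose_nonsing_inv, Matrix.mul_assoc Gᴴ _ G,
        Matrix.nonsing_inv_mul_cancel_left _ _ hGHdet,
        Matrix.mul_nonsing_inv_cancel_right _ _ hGdet]
    rw [hEq2] at hc
    exact (myKey hQ).mpr hc
end

section
/- A matrix A ∈ ℝ^{n×n} is Schur if and only if there exists a symmetric positive definite matrix Q ∈ ℝ^{n×n} such that Q − Aᵀ·Q·A is positive definite. -/
open Matrix Polynomial Filter

lemma root_iff_spectrum_aux {m : ℕ} (B : Matrix (Fin m) (Fin m) ℂ) (μ : ℂ) :
    μ ∈ spectrum ℂ B ↔ B.charpoly.IsRoot μ := by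
  rw [spectrum.mem_iff, Matrix.isUnit_iff_isUnit_det, isUnit_iff_ne_zero, not_not,
    Polynomial.IsRoot, Matrix.charpoly, ← Polynomial.coe_evalRingHom, RingHom.map_det]
  have : (evalRingHom μ).mapMatrix B.charmatrix
      = (algebraMap ℂ (Matrix (Fin m) (Fin m) ℂ)) μ - B := by
    ext i j
    by_cases h : i = j <;>
      simp [h, Matrix.charmatrix_apply, Matrix.algebraMap_matrix_apply,
        Matrix.one_apply, Matrix.diagonal_apply, Matrix.sub_apply]
  rw [this]

/-- Geometric-type summable bound on the entries of powers of a Schur matrix. -/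
lemma schur_entry_summable {n : ℕ} (A : Matrix (Fin n) (Fin n) ℝ) (hA : IsSchur A) :
    ∃ c : ℕ → ℝ, Summable c ∧ (∀ k, 0 ≤ c k) ∧ ∀ (k : ℕ) (i j : Fin n), |(A ^ k) i j| ≤ c k := by
  rcases Nat.eq_zero_or_pos n with hn | hn
  · subst hn
    exact ⟨0, summable_zero, fun k => le_refl 0, fun k i j => i.elim0⟩
  haveI : NeZero n := ⟨hn.ne'⟩
  letI : NormedRing (Matrix (Fin n) (Fin n) ℂ) := Matrix.linftyOpNormedRing
  letI : NormedAlgebra ℂ (Matrix (Fin n) (Fin n) ℂ) := Matrix.linftyOpNormedAlgebra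
  set B : Matrix (Fin n) (Fin n) ℂ := A.map (algebraMap ℝ ℂ) with hB
  have hBk : ∀ k : ℕ, B ^ k = (A ^ k).map (algebraMap ℝ ℂ) := by
    intro k
    simp only [hB]
    exact (map_pow ((algebraMap ℝ ℂ).mapMatrix) A k).symm
  have hρ : spectralRadius ℂ B < 1 := by
    have := spectrum.spectralRadius_lt_of_forall_lt (a := B) (r := 1) ?_
    · simpa using this
    · intro z hz
      rw [root_iff_spectrum_aux] at hz
      rw [hB, Matrix.charpoly_map] at hz
      have := hA z hz
      simpa [← NNReal.coe_lt_one, ← norm_toNNReal] using this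
  obtain ⟨r, hr1, hr2⟩ := exists_between hρ
  have hrtop : r ≠ ⊤ := (hr2.trans_le le_top).ne
  set r' : NNReal := r.toNNReal with hr'
  have hrr : r = (r' : ENNReal) := (ENNReal.coe_toNNReal hrtop).symm
  have hr'1 : r' < 1 := by rw [hrr] at hr2; exact_mod_cast hr2
  have T := spectrum.pow_nnnorm_pow_one_div_tendsto_nhds_spectralRadius B
  have hev : ∀ᶠ k : ℕ in atTop, (‖B ^ k‖₊ : ENNReal) ^ (1 / (k : ℝ)) < r :=
    T.eventually_lt_const hr1
  obtain ⟨N, hN⟩ := (hev.and (eventually_ge_atTop 1)).exists_forall_of_atTop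
  have key : ∀ k, N ≤ k → ‖B ^ k‖₊ ≤ r' ^ k := by
    intro k hk
    obtain ⟨h1, h2⟩ := hN k hk
    have hkpos : (0:ℝ) < k := by exact_mod_cast h2
    have h3 := ENNReal.rpow_le_rpow h1.le hkpos.le
    rw [← ENNReal.rpow_mul, one_div, inv_mul_cancel₀ hkpos.ne', ENNReal.rpow_one] at h3
    rw [hrr, ← ENNReal.coe_rpow_of_nonneg _ hkpos.le] at h3
    have h5 : ‖B ^ k‖₊ ≤ r' ^ (k : ℝ) := ENNReal.coe_le_coe.mp h3
    rwa [NNReal.rpow_natCast] at h5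
  have hsum : Summable (fun k : ℕ => ‖B ^ k‖) := by
    rw [← summable_nat_add_iff N]
    have hg : Summable (fun k : ℕ => ((r' : ℝ) ^ k * (r' : ℝ) ^ N)) :=
      (summable_geometric_of_lt_one r'.coe_nonneg (by exact_mod_cast hr'1)).mul_right _
    refine Summable.of_nonneg_of_le (fun k => norm_nonneg _) (fun k => ?_) hg
    have := key (k + N) (Nat.le_add_left N k)
    have h6 : ‖B ^ (k + N)‖ ≤ ((r' ^ (k + N) : NNReal) : ℝ) := by exact_mod_cast this
    simpa [pow_add] using h6
  have entry_le : ∀ (M : Matrix (Fin n) (Fin n) ℂ) (i j : Fin n), ‖M i j‖ ≤ ‖M‖ := by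
    intro M i j
    have h1 : ‖M i j‖₊ ≤ ∑ j', ‖M i j'‖₊ :=
      Finset.single_le_sum (f := fun j' => ‖M i j'‖₊) (fun _ _ => zero_le) (Finset.mem_univ j)
    have h2 : (∑ j', ‖M i j'‖₊) ≤ Finset.univ.sup (fun i => ∑ j', ‖M i j'‖₊) :=
      Finset.le_sup (f := fun i => ∑ j', ‖M i j'‖₊) (Finset.mem_univ i)
    have h3 := h1.trans h2
    rw [← Matrix.linfty_opNNNorm_def] at h3
    exact h3
  refine ⟨fun k => ‖B ^ k‖, hsum, fun k => norm_nonneg _, fun k i j => ?_⟩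
  have : |(A ^ k) i j| = ‖(B ^ k) i j‖ := by
    rw [hBk k, Matrix.map_apply]
    simp [Complex.norm_real]
  rw [this]
  exact entry_le _ i j

/-- Real quadratic form of a mapped real matrix evaluated on a complex vector. -/
lemma quad_map_eq {m : ℕ} (S : Matrix (Fin m) (Fin m) ℝ) (hS : Sᵀ = S) (v : Fin m → ℂ) :
    star v ⬝ᵥ ((S.map (algebraMap ℝ ℂ)) *ᵥ v)
      = ((((fun i => (v i).re) ⬝ᵥ S *ᵥ (fun i => (v i).re))
          + ((fun i => (v i).im) ⬝ᵥ S *ᵥ (fun i => (v i).im)) : ℝ) : ℂ) := by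
  classical
  set a : Fin m → ℝ := fun i => (v i).re with ha
  set b : Fin m → ℝ := fun i => (v i).im with hb
  set ac : Fin m → ℂ := fun i => ((a i : ℝ) : ℂ) with hac
  set bc : Fin m → ℂ := fun i => ((b i : ℝ) : ℂ) with hbc
  have hv : v = ac + Complex.I • bc := by
    funext i
    simp only [hac, hbc, ha, hb, Pi.add_apply, Pi.smul_apply, smul_eq_mul]
    apply Complex.ext <;> simp
  have hsv : star v = ac - Complex.I • bc := by
    funext i
    simp only [hac, hbc, ha, hb, Pi.sub_apply, Pi.smul_apply, smul_eq_mul, Pi.star_apply]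
    apply Complex.ext <;> simp
  set Sc : Matrix (Fin m) (Fin m) ℂ := S.map (algebraMap ℝ ℂ) with hSc
  have cast_quad : ∀ x y : Fin m → ℝ,
      (fun i => ((x i : ℝ) : ℂ)) ⬝ᵥ (Sc *ᵥ fun i => ((y i : ℝ) : ℂ))
        = ((x ⬝ᵥ S *ᵥ y : ℝ) : ℂ) := by
    intro x y
    simp only [hSc, dotProduct, mulVec, Matrix.map_apply]
    push_cast
    rfl
  have hsymm : b ⬝ᵥ S *ᵥ a = a ⬝ᵥ S *ᵥ b := by
    rw [Matrix.dotProduct_mulVec]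
    conv_lhs => rw [← hS]
    rw [Matrix.vecMul_transpose, dotProduct_comm]
  rw [hsv, hv]
  simp only [Matrix.mulVec_add, Matrix.mulVec_smul, sub_dotProduct,
    dotProduct_add, smul_dotProduct, dotProduct_smul,
    smul_eq_mul]
  rw [cast_quad, cast_quad, cast_quad, cast_quad, hsymm]
  push_cast
  ring_nf
  simp [Complex.I_sq]

theorem stmt_8 {n : ℕ} (A : Matrix (Fin n) (Fin n) ℝ) :
    IsSchur A ↔ ∃ Q : Matrix (Fin n) (Fin n) ℝ, Q.PosDef ∧ (Q - Aᵀ * Q * A).PosDef := by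
  constructor
  · -- forward: construct the Lyapunov matrix
    intro hA
    obtain ⟨c, hcs, hcnn, hc⟩ := schur_entry_summable A hA
    obtain ⟨C, hC⟩ := hcs.tendsto_atTop_zero.bddAbove_range
    have hCb : ∀ k, c k ≤ C := fun k => hC ⟨k, rfl⟩
    set M : ℕ → Matrix (Fin n) (Fin n) ℝ := fun k => (A ^ k)ᵀ * (A ^ k) with hM
    have hMapp : ∀ k i j, M k i j = ∑ l, (A ^ k) l i * (A ^ k) l j := by
      intro k i j
      simp only [hM, Matrix.mul_apply, Matrix.transpose_apply]
    have hMsum : ∀ i j, Summable (fun k => M k i j) := by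
      intro i j
      apply Summable.of_abs
      refine Summable.of_nonneg_of_le (fun k => abs_nonneg _) (fun k => ?_)
        (hcs.mul_left ((n : ℝ) * C))
      rw [hMapp]
      calc |∑ l, (A ^ k) l i * (A ^ k) l j| ≤ ∑ l, |(A ^ k) l i * (A ^ k) l j| :=
            Finset.abs_sum_le_sum_abs _ _
        _ ≤ ∑ _l : Fin n, C * c k := by
            refine Finset.sum_le_sum fun l _ => ?_
            rw [abs_mul]
            exact mul_le_mul ((hc k l i).trans (hCb k)) (hc k l j) (abs_nonneg _)
              ((hcnn 0).trans (hCb 0))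
        _ = (n : ℝ) * C * c k := by
            simp [Finset.sum_const, mul_assoc]
    set Q : Matrix (Fin n) (Fin n) ℝ := Matrix.of fun i j => ∑' k, M k i j with hQ
    have hs1 : ∀ (x : Fin n → ℝ) i j, Summable fun k => M k i j * x j :=
      fun x i j => (hMsum i j).mul_right _
    have hs2 : ∀ (x : Fin n → ℝ) i, Summable fun k => ∑ j, M k i j * x j :=
      fun x i => summable_sum (fun j _ => hs1 x i j)
    have hs3 : ∀ (x : Fin n → ℝ) i, Summable fun k => x i * ∑ j, M k i j * x j :=
      fun x i => (hs2 x i).mul_left _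
    have hfs : ∀ x : Fin n → ℝ, Summable (fun k => x ⬝ᵥ (M k *ᵥ x)) := by
      intro x
      refine (summable_sum (s := Finset.univ)
        (f := fun i k => x i * ∑ j, M k i j * x j) (fun i _ => hs3 x i)).congr fun k => ?_
      simp [dotProduct, Matrix.mulVec]
    have hquad : ∀ x : Fin n → ℝ, x ⬝ᵥ (Q *ᵥ x) = ∑' k, x ⬝ᵥ (M k *ᵥ x) := by
      intro x
      have e0 : x ⬝ᵥ (Q *ᵥ x) = ∑ i, x i * ∑ j, (∑' k, M k i j) * x j := by
        simp [dotProduct, Matrix.mulVec, hQ]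
      rw [e0]
      have e1 : ∀ i, (∑ j, (∑' k, M k i j) * x j) = ∑' k, ∑ j, M k i j * x j := by
        intro i
        calc ∑ j, (∑' k, M k i j) * x j = ∑ j, ∑' k, M k i j * x j :=
              Finset.sum_congr rfl fun j _ => tsum_mul_right.symm
          _ = ∑' k, ∑ j, M k i j * x j := (Summable.tsum_finsetSum fun j _ => hs1 x i j).symm
      calc ∑ i, x i * ∑ j, (∑' k, M k i j) * x j
          = ∑ i, ∑' k, x i * ∑ j, M k i j * x j := by
            refine Finset.sum_congr rfl fun i _ => ?_
            rw [e1]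
            exact tsum_mul_left.symm
        _ = ∑' k, ∑ i, x i * ∑ j, M k i j * x j := (Summable.tsum_finsetSum fun i _ => hs3 x i).symm
        _ = ∑' k, x ⬝ᵥ (M k *ᵥ x) := tsum_congr fun k => by
            simp [dotProduct, Matrix.mulVec]
    have hMf : ∀ (x : Fin n → ℝ) k, x ⬝ᵥ (M k *ᵥ x) = (A ^ k *ᵥ x) ⬝ᵥ (A ^ k *ᵥ x) := by
      intro x k
      show x ⬝ᵥ (((A ^ k)ᵀ * (A ^ k)) *ᵥ x) = _
      rw [← Matrix.mulVec_mulVec, Matrix.dotProduct_mulVec, Matrix.vecMul_transpose]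
    have hnn : ∀ (x : Fin n → ℝ) k, 0 ≤ x ⬝ᵥ (M k *ᵥ x) := by
      intro x k
      rw [hMf]
      exact Finset.sum_nonneg fun i _ => mul_self_nonneg _
    have h0 : ∀ x : Fin n → ℝ, x ≠ 0 → 0 < x ⬝ᵥ (M 0 *ᵥ x) := by
      intro x hx
      rw [hMf]
      simp only [pow_zero, Matrix.one_mulVec]
      refine lt_of_le_of_ne (Finset.sum_nonneg fun i _ => mul_self_nonneg _) ?_
      intro h
      exact hx (dotProduct_self_eq_zero.mp h.symm)
    have hQherm : Q.IsHermitian := by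
      rw [Matrix.IsHermitian, Matrix.conjTranspose_eq_transpose_of_trivial]
      ext i j
      show Q j i = Q i j
      simp only [hQ, Matrix.of_apply]
      refine tsum_congr fun k => ?_
      rw [hMapp, hMapp]
      exact Finset.sum_congr rfl fun l _ => mul_comm _ _
    have hAQA : ∀ x : Fin n → ℝ, x ⬝ᵥ ((Aᵀ * Q * A) *ᵥ x) = ∑' k, x ⬝ᵥ (M (k+1) *ᵥ x) := by
      intro x
      have e1 : (Aᵀ * Q * A) *ᵥ x = Aᵀ *ᵥ (Q *ᵥ (A *ᵥ x)) := by
        rw [Matrix.mulVec_mulVec, Matrix.mulVec_mulVec]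
      rw [e1, Matrix.dotProduct_mulVec, Matrix.vecMul_transpose, hquad (A *ᵥ x)]
      refine tsum_congr fun k => ?_
      rw [hMf, hMf, Matrix.mulVec_mulVec, ← pow_succ]
    have hdiff : ∀ x : Fin n → ℝ, x ≠ 0 → 0 < x ⬝ᵥ ((Q - Aᵀ * Q * A) *ᵥ x) := by
      intro x hx
      rw [Matrix.sub_mulVec, dotProduct_sub, hquad, hAQA,
        Summable.tsum_eq_zero_add (hfs x)]
      simpa using h0 x hx
    have hAQAherm : (Aᵀ * Q * A).IsHermitian := by
      have h := Matrix.isHermitian_conjTranspose_mul_mul A hQherm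
      rwa [Matrix.conjTranspose_eq_transpose_of_trivial] at h
    refine ⟨Q, Matrix.PosDef.of_dotProduct_mulVec_pos hQherm fun x hx => ?_,
      Matrix.PosDef.of_dotProduct_mulVec_pos (hQherm.sub hAQAherm) fun x hx => ?_⟩
    · simp only [star_trivial]
      rw [hquad]
      exact Summable.tsum_pos (hfs x) (hnn x) 0 (h0 x hx)
    · simp only [star_trivial]
      exact hdiff x hx
  · -- backward: a Lyapunov certificate forces all eigenvalues inside the unit disc
    rintro ⟨Q, hQ, hR⟩ μ hroot
    set B : Matrix (Fin n) (Fin n) ℂ := A.map (algebraMap ℝ ℂ) with hB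
    have hroot' : B.charpoly.IsRoot μ := by
      rw [hB, Matrix.charpoly_map]
      exact hroot
    have hdet : ((algebraMap ℂ (Matrix (Fin n) (Fin n) ℂ)) μ - B).det = 0 := by
      rw [← root_iff_spectrum_aux, spectrum.mem_iff, Matrix.isUnit_iff_isUnit_det,
        isUnit_iff_ne_zero, not_not] at hroot'
      exact hroot'
    obtain ⟨v, hv0, hveq⟩ := Matrix.exists_mulVec_eq_zero_iff.mpr hdet
    have heig : B *ᵥ v = μ • v := by
      rw [Matrix.sub_mulVec] at hveq
      have h2 : (algebraMap ℂ (Matrix (Fin n) (Fin n) ℂ)) μ *ᵥ v = μ • v := by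
        rw [Algebra.algebraMap_eq_smul_one, Matrix.smul_mulVec, Matrix.one_mulVec]
      rw [h2] at hveq
      exact (sub_eq_zero.mp hveq).symm
    set a : Fin n → ℝ := fun i => (v i).re with ha
    set b : Fin n → ℝ := fun i => (v i).im with hbdef
    set R : Matrix (Fin n) (Fin n) ℝ := Q - Aᵀ * Q * A with hRdef
    have hQsym : Qᵀ = Q := by
      have h := hQ.1
      rwa [Matrix.IsHermitian, Matrix.conjTranspose_eq_transpose_of_trivial] at h
    have hRsym : Rᵀ = R := by
      have h := hR.1
      rwa [Matrix.IsHermitian, Matrix.conjTranspose_eq_transpose_of_trivial] at h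
    have hab : a ≠ 0 ∨ b ≠ 0 := by
      by_contra h
      push_neg at h
      apply hv0
      funext i
      have h1 : a i = 0 := by rw [h.1]; rfl
      have h2 : b i = 0 := by rw [h.2]; rfl
      apply Complex.ext
      · simpa [ha] using h1
      · simpa [hbdef] using h2
    have quadpos : ∀ S : Matrix (Fin n) (Fin n) ℝ, S.PosDef →
        0 < a ⬝ᵥ S *ᵥ a + b ⬝ᵥ S *ᵥ b := by
      intro S hS
      rcases hab with h | h
      · have h1 : 0 < a ⬝ᵥ S *ᵥ a := by simpa using hS.dotProduct_mulVec_pos h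
        have h2 : 0 ≤ b ⬝ᵥ S *ᵥ b := by simpa using hS.posSemidef.dotProduct_mulVec_nonneg b
        linarith
      · have h1 : 0 ≤ a ⬝ᵥ S *ᵥ a := by simpa using hS.posSemidef.dotProduct_mulVec_nonneg a
        have h2 : 0 < b ⬝ᵥ S *ᵥ b := by simpa using hS.dotProduct_mulVec_pos h
        linarith
    set cQ : ℝ := a ⬝ᵥ Q *ᵥ a + b ⬝ᵥ Q *ᵥ b with hcQdef
    set cR : ℝ := a ⬝ᵥ R *ᵥ a + b ⬝ᵥ R *ᵥ b with hcRdef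
    have hcQ : 0 < cQ := quadpos Q hQ
    have hcR : 0 < cR := quadpos R hR
    have hq1 : star v ⬝ᵥ ((Q.map (algebraMap ℝ ℂ)) *ᵥ v) = (cQ : ℂ) := quad_map_eq Q hQsym v
    have hq2 : star v ⬝ᵥ ((R.map (algebraMap ℝ ℂ)) *ᵥ v) = (cR : ℂ) := quad_map_eq R hRsym v
    have hBH : Bᴴ = Bᵀ := by
      rw [hB]
      ext i j
      simp [Matrix.conjTranspose_apply, Matrix.map_apply, Complex.conj_ofReal]
    have hmap : R.map (algebraMap ℝ ℂ)
        = Q.map (algebraMap ℝ ℂ) - Bᵀ * Q.map (algebraMap ℝ ℂ) * B := by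
      have h : (algebraMap ℝ ℂ).mapMatrix R
          = (algebraMap ℝ ℂ).mapMatrix Q
            - (algebraMap ℝ ℂ).mapMatrix Aᵀ * (algebraMap ℝ ℂ).mapMatrix Q
              * (algebraMap ℝ ℂ).mapMatrix A := by
        rw [hRdef, _root_.map_sub, _root_.map_mul, _root_.map_mul]
      simpa [RingHom.mapMatrix_apply, Matrix.transpose_map, hB] using h
    have hBQB : star v ⬝ᵥ ((Bᵀ * Q.map (algebraMap ℝ ℂ) * B) *ᵥ v)
        = (starRingEnd ℂ) μ * μ * (cQ : ℂ) := by
      rw [← Matrix.mulVec_mulVec, ← Matrix.mulVec_mulVec, heig, Matrix.mulVec_smul,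
        Matrix.mulVec_smul, dotProduct_smul, Matrix.dotProduct_mulVec,
        Matrix.vecMul_transpose]
      have hstar : B *ᵥ star v = star (B *ᵥ v) := by
        rw [Matrix.star_mulVec, hBH, Matrix.vecMul_transpose]
      rw [hstar, heig, star_smul, smul_dotProduct]
      rw [hq1]
      simp only [smul_eq_mul, Complex.star_def]
      ring
    have hkey : (cR : ℂ) = (cQ : ℂ) - (starRingEnd ℂ) μ * μ * (cQ : ℂ) := by
      rw [← hq2, hmap, Matrix.sub_mulVec, dotProduct_sub, hq1, hBQB]
    have habs : (starRingEnd ℂ) μ * μ = ((‖μ‖ ^ 2 : ℝ) : ℂ) := by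
      rw [mul_comm, Complex.mul_conj]
      norm_cast
      exact (Complex.sq_norm μ).symm
    rw [habs] at hkey
    have hreal : cR = cQ - ‖μ‖ ^ 2 * cQ := by
      have := hkey
      push_cast at this
      exact_mod_cast this
    have habs2 : ‖μ‖ ^ 2 < 1 := by nlinarith [hcQ, hcR, hreal]
    nlinarith [norm_nonneg μ, habs2, sq_nonneg (‖μ‖ - 1)]
end

section
/- Let δ > 0, let E ∈ ℝ^{n×n} be invertible, let F ∈ ℝ^{n×n}, let P ∈ ℝ^{n×n} be symmetric positive definite, and set Q := Eᵀ·P·E and A := I_n + δ·E⁻¹·F. Then Q − Aᵀ·Q·A is positive definite if and only if the block matrix [[−Eᵀ·P·F − Fᵀ·P·E, Fᵀ],[F, (1/δ)·P⁻¹]] ∈ ℝ^{2n×2n} is positive definite. -/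
open Matrix

lemma posDef_smul_aux {n : Type*} [Fintype n] {M : Matrix n n ℝ} (hM : M.PosDef)
    {c : ℝ} (hc : 0 < c) : (c • M).PosDef := by
  refine posDef_iff_dotProduct_mulVec.mpr ⟨?_, fun x hx => ?_⟩
  · have h := hM.1
    rw [IsHermitian] at h ⊢
    rw [conjTranspose_smul, h]
    simp
  · have := hM.dotProduct_mulVec_pos hx
    rw [smul_mulVec, dotProduct_smul]
    exact smul_pos hc this

lemma posDef_smul_iff {n : Type*} [Fintype n] (M : Matrix n n ℝ)
    {c : ℝ} (hc : 0 < c) : (c • M).PosDef ↔ M.PosDef := by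
  constructor
  · intro h
    have := posDef_smul_aux h (inv_pos.mpr hc)
    rwa [smul_smul, inv_mul_cancel₀ hc.ne', one_smul] at this
  · exact fun h => posDef_smul_aux h hc

lemma posDef_fromBlocks₂₂ {m n : Type*} [Fintype m] [DecidableEq m] [Fintype n] [DecidableEq n]
    (A : Matrix m m ℝ) (B : Matrix m n ℝ) {D : Matrix n n ℝ} (hD : D.PosDef) :
    (fromBlocks A B Bᴴ D).PosDef ↔ (A - B * D⁻¹ * Bᴴ).PosDef := by
  haveI : Invertible D := hD.isUnit.invertible
  rw [posDef_iff_dotProduct_mulVec, posDef_iff_dotProduct_mulVec]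
  constructor
  · rintro ⟨h1, h2⟩
    refine ⟨(Matrix.IsHermitian.fromBlocks₂₂ A B hD.1).mp h1, fun x hx => ?_⟩
    have hz : (x ⊕ᵥ -((D⁻¹ * Bᴴ) *ᵥ x)) ≠ 0 := by
      intro hc
      exact hx (funext fun i => congr_fun hc (Sum.inl i))
    have := h2 hz
    rw [dotProduct_mulVec, schur_complement_eq₂₂ A B _ _ hD.1, add_neg_cancel] at this
    simpa [dotProduct_mulVec] using this
  · rintro ⟨h1, h2⟩
    refine ⟨(Matrix.IsHermitian.fromBlocks₂₂ A B hD.1).mpr h1, fun z hz => ?_⟩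
    rw [dotProduct_mulVec, ← Sum.elim_comp_inl_inr z,
      schur_complement_eq₂₂ A B _ _ hD.1]
    by_cases hx : z ∘ Sum.inl = 0
    · have hy : z ∘ Sum.inr ≠ 0 := by
        intro hy
        apply hz
        funext i
        cases i with
        | inl j => exact congr_fun hx j
        | inr j => exact congr_fun hy j
      rw [hx]
      simp only [mulVec_zero, zero_add, star_zero, zero_vecMul, zero_dotProduct, add_zero]
      rw [← dotProduct_mulVec]
      exact hD.dotProduct_mulVec_pos hy
    · refine add_pos_of_nonneg_of_pos ?_ ?_
      · rw [← dotProduct_mulVec]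
        exact hD.posSemidef.dotProduct_mulVec_nonneg _
      · rw [← dotProduct_mulVec]
        exact h2 hx

theorem stmt_9 {n : ℕ} (δ : ℝ) (hδ : 0 < δ)
    (E F P : Matrix (Fin n) (Fin n) ℝ) (hE : IsUnit E) (hP : P.PosDef) :
    let Q := Eᵀ * P * E
    let A := (1 : Matrix (Fin n) (Fin n) ℝ) + δ • (E⁻¹ * F)
    (Q - Aᵀ * Q * A).PosDef ↔
      (Matrix.fromBlocks (-(Eᵀ * P * F) - Fᵀ * P * E) Fᵀ F ((1 / δ) • P⁻¹)).PosDef := by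
  intro Q A
  have hdet : IsUnit E.det := (Matrix.isUnit_iff_isUnit_det E).mp hE
  have hEi : E * E⁻¹ = 1 := mul_nonsing_inv E hdet
  have hT : E⁻¹ᵀ * Eᵀ = 1 := by rw [← Matrix.transpose_mul, hEi, Matrix.transpose_one]
  have h1 : Eᵀ * P * E * (E⁻¹ * F) = Eᵀ * P * F := by
    simp only [Matrix.mul_assoc]
    rw [← Matrix.mul_assoc E E⁻¹ F, hEi, Matrix.one_mul]
  have h2 : Fᵀ * E⁻¹ᵀ * (Eᵀ * P * E) = Fᵀ * P * E := by
    simp only [Matrix.mul_assoc]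
    rw [← Matrix.mul_assoc E⁻¹ᵀ Eᵀ (P * E), hT, Matrix.one_mul]
  have h3 : Fᵀ * P * E * (E⁻¹ * F) = Fᵀ * P * F := by
    simp only [Matrix.mul_assoc]
    rw [← Matrix.mul_assoc E E⁻¹ F, hEi, Matrix.one_mul]
  -- inverse of the (2,2) block
  have hPdet : IsUnit P.det := hP.det_pos.ne'.isUnit
  have hPi : P⁻¹ * P = 1 := nonsing_inv_mul P hPdet
  have hDinv : ((1 / δ) • P⁻¹ : Matrix (Fin n) (Fin n) ℝ)⁻¹ = δ • P := by
    apply Matrix.inv_eq_right_inv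
    rw [Matrix.smul_mul, Matrix.mul_smul, smul_smul, hPi, one_div,
      inv_mul_cancel₀ hδ.ne', one_smul]
  have hD : ((1 / δ) • P⁻¹ : Matrix (Fin n) (Fin n) ℝ).PosDef :=
    posDef_smul_aux hP.inv (by positivity)
  have hFh : (Fᵀ)ᴴ = F := by
    ext i j
    simp [conjTranspose_apply]
  have key : Q - Aᵀ * Q * A
      = δ • ((-(Eᵀ * P * F) - Fᵀ * P * E) - Fᵀ * ((1 / δ) • P⁻¹)⁻¹ * (Fᵀ)ᴴ) := by
    show Eᵀ * P * E - ((1 + δ • (E⁻¹ * F))ᵀ * (Eᵀ * P * E) * (1 + δ • (E⁻¹ * F))) = _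
    rw [hDinv, hFh, Matrix.transpose_add, Matrix.transpose_one, Matrix.transpose_smul,
      Matrix.transpose_mul]
    simp only [Matrix.add_mul, Matrix.mul_add, Matrix.smul_mul, Matrix.mul_smul,
      Matrix.one_mul, Matrix.mul_one, h1, h2, h3]
    module
  rw [key, posDef_smul_iff _ hδ]
  rw [show (Matrix.fromBlocks (-(Eᵀ * P * F) - Fᵀ * P * E) Fᵀ F ((1 / δ) • P⁻¹))
      = (Matrix.fromBlocks (-(Eᵀ * P * F) - Fᵀ * P * E) Fᵀ (Fᵀ)ᴴ ((1 / δ) • P⁻¹)) by rw [hFh]]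
  rw [posDef_fromBlocks₂₂ _ _ hD]
end
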